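/- arXiv:2604.17904 — 3 statements merged into one kernel-verified Lean document; each statement's English description precedes it below -/
import Mathlib

section
/- Let (a_n)_n ∈ ℂ~_s be such that the hyperseries Σ_{n∈ℕ~} a_n converges to s ∈ ℂ~, and let M ∈ ℕ~. Then the hypersequence N ∈ ℕ~ ↦ Σ_{n=0}^{N+M} a_n has hyperlimit s, the hypersequence N ∈ ℕ~ ↦ Σ_{n=N}^{N+M} a_n has hyperlimit 0, and in particular the hypersequence (a_n)_{n∈ℕ~} has hyperlimit 0. -/
open Filter

noncomputable section

/-- `P ε` holds for all ε small. -/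
def EvS (P : ℝ → Prop) : Prop := ∃ ε₀ : ℝ, 0 < ε₀ ∧ ε₀ ≤ 1 ∧ ∀ ε : ℝ, 0 < ε → ε ≤ ε₀ → P ε

theorem EvS.mono {P Q : ℝ → Prop} (h : EvS P) (h2 : ∀ ε, 0 < ε → ε ≤ 1 → P ε → Q ε) : EvS Q := by
  obtain ⟨e, he, he1, hP⟩ := h
  exact ⟨e, he, he1, fun ε hε hεe => h2 ε hε (hεe.trans he1) (hP ε hε hεe)⟩

theorem EvS.and {P Q : ℝ → Prop} (h : EvS P) (h' : EvS Q) : EvS fun ε => P ε ∧ Q ε := by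
  obtain ⟨e, he, he1, hP⟩ := h
  obtain ⟨e', he', he1', hQ⟩ := h'
  exact ⟨min e e', lt_min he he', le_trans (min_le_left _ _) he1, fun ε hε hm =>
    ⟨hP ε hε (le_trans hm (min_le_left _ _)), hQ ε hε (le_trans hm (min_le_right _ _))⟩⟩

/-- A gauge: a nonincreasing net of reals in (0,1] tending to 0. -/
structure Gauge where
  ρ : ℝ → ℝ
  pos : ∀ ε : ℝ, 0 < ε → ε ≤ 1 → 0 < ρ ε
  le_one : ∀ ε : ℝ, 0 < ε → ε ≤ 1 → ρ ε ≤ 1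
  anti : ∀ ε ε' : ℝ, 0 < ε → ε ≤ ε' → ε' ≤ 1 → ρ ε' ≤ ρ ε
  to_zero : Tendsto ρ (nhdsWithin 0 (Set.Ioi 0)) (nhds 0)

namespace Gauge

theorem evs_le (g : Gauge) {δ : ℝ} (hδ : 0 < δ) : EvS fun ε => g.ρ ε ≤ δ := by
  have h := g.to_zero.eventually_lt_const hδ
  rw [eventually_nhdsWithin_iff, Metric.eventually_nhds_iff] at h
  obtain ⟨e, he, hP⟩ := h
  refine ⟨min (e / 2) 1, by positivity, min_le_right _ _, fun ε hε hεe => ?_⟩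
  have hd : dist ε 0 < e := by
    rw [Real.dist_eq, sub_zero, abs_of_pos hε]
    have h1 : ε ≤ e / 2 := le_trans hεe (min_le_left _ _)
    linarith
  exact (hP hd (Set.mem_Ioi.mpr hε)).le

variable {𝕜 : Type} [RCLike 𝕜]

/-- ρ-moderate nets. -/
def Mod (g : Gauge) (x : ℝ → 𝕜) : Prop := ∃ N : ℕ, EvS fun ε => ‖x ε‖ ≤ g.ρ ε ^ (-(N : ℤ))

/-- ρ-negligible nets. -/
def Negl (g : Gauge) (x : ℝ → 𝕜) : Prop := ∀ q : ℕ, EvS fun ε => ‖x ε‖ ≤ g.ρ ε ^ q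

theorem Negl.mod {g : Gauge} {x : ℝ → 𝕜} (h : g.Negl x) : g.Mod x := by
  refine ⟨0, (h 0).mono fun ε hε hε1 hx => ?_⟩
  simpa using hx

theorem negl_sub_self (g : Gauge) (x : ℝ → 𝕜) : g.Negl fun ε => x ε - x ε := fun q =>
  ⟨1, one_pos, le_refl 1, fun ε hε hε1 => by
    simp only [sub_self, norm_zero]
    exact pow_nonneg (g.pos ε hε hε1).le q⟩

theorem negl_of_evs_eq (g : Gauge) {x y : ℝ → 𝕜} (h : EvS fun ε => x ε = y ε) :
    g.Negl fun ε => x ε - y ε := fun q => h.mono fun ε hε hε1 he => by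
  show ‖x ε - y ε‖ ≤ _
  rw [he, sub_self, norm_zero]; exact pow_nonneg (g.pos ε hε hε1).le q

theorem Negl.symm_sub {g : Gauge} {x y : ℝ → 𝕜} (h : g.Negl fun ε => x ε - y ε) :
    g.Negl fun ε => y ε - x ε := fun q => (h q).mono fun ε _ _ hx => by rwa [norm_sub_rev]

theorem Negl.add {g : Gauge} {x y : ℝ → 𝕜} (hx : g.Negl x) (hy : g.Negl y) :
    g.Negl fun ε => x ε + y ε := by
  intro q
  refine (((hx (q+1)).and (hy (q+1))).and (g.evs_le (by norm_num : (0:ℝ) < 1/2))).mono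
    fun ε hε hε1 h => ?_
  obtain ⟨⟨h1, h2⟩, h3⟩ := h
  have hρ := g.pos ε hε hε1
  calc ‖x ε + y ε‖ ≤ ‖x ε‖ + ‖y ε‖ := norm_add_le _ _
    _ ≤ g.ρ ε ^ (q+1) + g.ρ ε ^ (q+1) := add_le_add h1 h2
    _ = 2 * g.ρ ε * g.ρ ε ^ q := by ring
    _ ≤ 1 * g.ρ ε ^ q := by
        apply mul_le_mul_of_nonneg_right _ (pow_nonneg hρ.le q)
        linarith
    _ = g.ρ ε ^ q := one_mul _

theorem Negl.neg {g : Gauge} {y : ℝ → 𝕜} (hy : g.Negl y) : g.Negl fun ε => -(y ε) :=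
  fun q => (hy q).mono fun ε _ _ h => by
    show ‖-(y ε)‖ ≤ _
    rwa [norm_neg]

theorem Negl.sub {g : Gauge} {x y : ℝ → 𝕜} (hx : g.Negl x) (hy : g.Negl y) :
    g.Negl fun ε => x ε - y ε := by
  have h := hx.add hy.neg
  have heq : (fun ε => x ε + -(y ε)) = fun ε => x ε - y ε := by funext ε; ring
  rwa [heq] at h

theorem Negl.triangle {g : Gauge} {x y z : ℝ → 𝕜} (h1 : g.Negl fun ε => x ε - y ε)
    (h2 : g.Negl fun ε => y ε - z ε) : g.Negl fun ε => x ε - z ε := by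
  have h := h1.add h2
  have heq : (fun ε => (x ε - y ε) + (y ε - z ε)) = fun ε => x ε - z ε := by
    funext ε; ring
  rwa [heq] at h

end Gauge

namespace Gauge

variable {𝕜 : Type} [RCLike 𝕜]

theorem zpow_neg_le (g : Gauge) {ε : ℝ} (hε : 0 < ε) (hε1 : ε ≤ 1) {a b : ℕ} (h : a ≤ b) :
    g.ρ ε ^ (-(a:ℤ)) ≤ g.ρ ε ^ (-(b:ℤ)) := by
  apply zpow_le_zpow_right_of_le_one₀ (g.pos ε hε hε1) (g.le_one ε hε hε1)
  omega

theorem Mod.of_norm_le {g : Gauge} {x : ℝ → 𝕜} {y : ℝ → ℝ} (hy : g.Mod y)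
    (h : ∀ ε, 0 < ε → ε ≤ 1 → ‖x ε‖ ≤ |y ε|) : g.Mod x := by
  obtain ⟨N, hN⟩ := hy
  exact ⟨N, hN.mono fun ε hε hε1 hb => le_trans (h ε hε hε1) (by rwa [Real.norm_eq_abs] at hb)⟩

theorem Mod.add {g : Gauge} {x y : ℝ → 𝕜} (hx : g.Mod x) (hy : g.Mod y) :
    g.Mod fun ε => x ε + y ε := by
  obtain ⟨N, hN⟩ := hx; obtain ⟨M, hM⟩ := hy
  refine ⟨N + M + 1, ((hN.and hM).and (g.evs_le (by norm_num : (0:ℝ) < 1/2))).mono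
    fun ε hε hε1 h => ?_⟩
  obtain ⟨⟨h1, h2⟩, h3⟩ := h
  have hρ := g.pos ε hε hε1
  have e1 : g.ρ ε ^ (-(N:ℤ)) ≤ g.ρ ε ^ (-((N+M:ℕ):ℤ)) := g.zpow_neg_le hε hε1 (by omega)
  have e2 : g.ρ ε ^ (-(M:ℤ)) ≤ g.ρ ε ^ (-((N+M:ℕ):ℤ)) := g.zpow_neg_le hε hε1 (by omega)
  have key : g.ρ ε ^ (-((N+M:ℕ):ℤ)) = g.ρ ε ^ (-((N+M+1:ℕ):ℤ)) * g.ρ ε := by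
    rw [← zpow_add_one₀ hρ.ne']
    congr 1
    push_cast
    ring
  have hpos : (0:ℝ) < g.ρ ε ^ (-((N+M+1:ℕ):ℤ)) := zpow_pos hρ _
  calc ‖x ε + y ε‖ ≤ ‖x ε‖ + ‖y ε‖ := norm_add_le _ _
    _ ≤ g.ρ ε ^ (-((N+M:ℕ):ℤ)) + g.ρ ε ^ (-((N+M:ℕ):ℤ)) := add_le_add (h1.trans e1) (h2.trans e2)
    _ = 2 * g.ρ ε * g.ρ ε ^ (-((N+M+1:ℕ):ℤ)) := by rw [key]; ring
    _ ≤ 1 * g.ρ ε ^ (-((N+M+1:ℕ):ℤ)) := by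
        apply mul_le_mul_of_nonneg_right _ hpos.le
        linarith
    _ = g.ρ ε ^ (-((N+M+1:ℕ):ℤ)) := one_mul _

theorem Mod.neg {g : Gauge} {x : ℝ → 𝕜} (hx : g.Mod x) : g.Mod fun ε => -(x ε) := by
  obtain ⟨N, hN⟩ := hx
  exact ⟨N, hN.mono fun ε _ _ h => by rwa [norm_neg]⟩

theorem Mod.sub {g : Gauge} {x y : ℝ → 𝕜} (hx : g.Mod x) (hy : g.Mod y) :
    g.Mod fun ε => x ε - y ε := by
  have h := hx.add hy.neg
  have heq : (fun ε => x ε + -(y ε)) = fun ε => x ε - y ε := by funext ε; ring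
  rwa [heq] at h

theorem Mod.mul {g : Gauge} {x y : ℝ → 𝕜} (hx : g.Mod x) (hy : g.Mod y) :
    g.Mod fun ε => x ε * y ε := by
  obtain ⟨N, hN⟩ := hx; obtain ⟨M, hM⟩ := hy
  refine ⟨N + M, (hN.and hM).mono fun ε hε hε1 h => ?_⟩
  obtain ⟨h1, h2⟩ := h
  have hρ := g.pos ε hε hε1
  calc ‖x ε * y ε‖ = ‖x ε‖ * ‖y ε‖ := norm_mul _ _
    _ ≤ g.ρ ε ^ (-(N:ℤ)) * g.ρ ε ^ (-(M:ℤ)) :=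
        mul_le_mul h1 h2 (norm_nonneg _) (zpow_nonneg hρ.le _)
    _ = g.ρ ε ^ (-((N+M:ℕ):ℤ)) := by rw [← zpow_add₀ hρ.ne']; congr 1; push_cast; ring

theorem Mod.norm {g : Gauge} {x : ℝ → 𝕜} (hx : g.Mod x) : g.Mod fun ε => ‖x ε‖ := by
  obtain ⟨N, hN⟩ := hx
  exact ⟨N, hN.mono fun ε _ _ h => by rwa [norm_norm]⟩

theorem Negl.mul_mod {g : Gauge} {x y : ℝ → 𝕜} (hx : g.Negl x) (hy : g.Mod y) :
    g.Negl fun ε => x ε * y ε := by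
  obtain ⟨M, hM⟩ := hy
  intro q
  refine ((hx (q + M)).and hM).mono fun ε hε hε1 h => ?_
  obtain ⟨h1, h2⟩ := h
  have hρ := g.pos ε hε hε1
  calc ‖x ε * y ε‖ = ‖x ε‖ * ‖y ε‖ := norm_mul _ _
    _ ≤ g.ρ ε ^ (q+M) * g.ρ ε ^ (-(M:ℤ)) :=
        mul_le_mul h1 h2 (norm_nonneg _) (pow_nonneg hρ.le _)
    _ = g.ρ ε ^ q := by
        rw [← zpow_natCast (g.ρ ε) (q+M), ← zpow_add₀ hρ.ne', ← zpow_natCast (g.ρ ε) q]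
        congr 1; push_cast; ring

theorem mod_const (g : Gauge) (c : 𝕜) (hc : ‖c‖ ≤ 1) : g.Mod fun _ => c := by
  refine ⟨0, 1, one_pos, le_refl 1, fun ε hε hε1 => ?_⟩
  simpa using hc

theorem mod_pow (g : Gauge) (q : ℕ) : g.Mod fun ε => g.ρ ε ^ q := by
  refine ⟨0, 1, one_pos, le_refl 1, fun ε hε hε1 => ?_⟩
  have hρ := g.pos ε hε hε1
  show ‖g.ρ ε ^ q‖ ≤ _
  rw [Real.norm_eq_abs, abs_of_nonneg (pow_nonneg hρ.le q)]
  simpa using pow_le_one₀ hρ.le (g.le_one ε hε hε1)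

theorem mod_zpow_neg (g : Gauge) (q : ℕ) : g.Mod fun ε => g.ρ ε ^ (-(q:ℤ)) := by
  refine ⟨q, 1, one_pos, le_refl 1, fun ε hε hε1 => ?_⟩
  have hρ := g.pos ε hε hε1
  show ‖g.ρ ε ^ (-(q:ℤ))‖ ≤ _
  rw [Real.norm_eq_abs, abs_of_nonneg (zpow_nonneg hρ.le _)]

/-- Hypernatural moderateness. -/
def NMod (g : Gauge) (n : ℝ → ℕ) : Prop := g.Mod fun ε => (n ε : ℝ)

end Gauge

instance gSetoid (g : Gauge) (𝕜 : Type) [RCLike 𝕜] : Setoid {x : ℝ → 𝕜 // g.Mod x} where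
  r a b := g.Negl fun ε => a.1 ε - b.1 ε
  iseqv := ⟨fun a => g.negl_sub_self a.1, fun h => h.symm_sub, fun h h' => h.triangle h'⟩

instance natSetoid (g : Gauge) : Setoid {n : ℝ → ℕ // g.NMod n} where
  r a b := g.Negl fun ε => (a.1 ε : ℝ) - (b.1 ε : ℝ)
  iseqv := ⟨fun a => g.negl_sub_self _, fun h => h.symm_sub, fun h h' => h.triangle h'⟩

/-- The ring of Robinson-Colombeau generalized numbers (ℂ~ for 𝕜 = ℂ, ℝ~ for 𝕜 = ℝ). -/
abbrev GQ (g : Gauge) (𝕜 : Type) [RCLike 𝕜] := Quotient (gSetoid g 𝕜)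

abbrev Ct (g : Gauge) := GQ g ℂ
abbrev Rt (g : Gauge) := GQ g ℝ

/-- The set of hypernatural numbers ℕ~. -/
abbrev Nt (g : Gauge) := Quotient (natSetoid g)

def GQ.mk (g : Gauge) {𝕜 : Type} [RCLike 𝕜] (x : ℝ → 𝕜) (h : g.Mod x) : GQ g 𝕜 :=
  Quotient.mk (gSetoid g 𝕜) ⟨x, h⟩

/-- `x` is a representative of the generalized number `z`. -/
def IsRep (g : Gauge) {𝕜 : Type} [RCLike 𝕜] (x : ℝ → 𝕜) (z : GQ g 𝕜) : Prop :=
  ∃ h : g.Mod x, GQ.mk g x h = z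

def Nt.mk (g : Gauge) (n : ℝ → ℕ) (h : g.NMod n) : Nt g := Quotient.mk (natSetoid g) ⟨n, h⟩

def Nt.IsRep (g : Gauge) (n : ℝ → ℕ) (m : Nt g) : Prop := ∃ h : g.NMod n, Nt.mk g n h = m

/-- dρ^q as an element of ℝ~. -/
def Gauge.dpow (g : Gauge) (q : ℕ) : Rt g := GQ.mk g (fun ε => g.ρ ε ^ q) (g.mod_pow q)

/-- dρ^(−q) as an element of ℝ~. -/
def Gauge.dpowNeg (g : Gauge) (q : ℕ) : Rt g := GQ.mk g (fun ε => g.ρ ε ^ (-(q:ℤ))) (g.mod_zpow_neg q)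

def GQ.zero (g : Gauge) (𝕜 : Type) [RCLike 𝕜] : GQ g 𝕜 :=
  GQ.mk g (fun _ => 0) (g.mod_const 0 (by simp))

def GQ.one (g : Gauge) (𝕜 : Type) [RCLike 𝕜] : GQ g 𝕜 :=
  GQ.mk g (fun _ => 1) (g.mod_const 1 (by simp))

variable {𝕜 : Type} [RCLike 𝕜]

/-- Order relation on ℝ~ (via some representatives). -/
def Rt.le (g : Gauge) (x y : Rt g) : Prop :=
  ∃ a b : {u : ℝ → ℝ // g.Mod u}, Quotient.mk (gSetoid g ℝ) a = x ∧
    Quotient.mk (gSetoid g ℝ) b = y ∧ EvS fun ε => a.1 ε ≤ b.1 ε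

/-- Strict order relation on ℝ~: `x < y` iff `y − x ≥ dρ^m` for some m. -/
def Rt.lt (g : Gauge) (x y : Rt g) : Prop :=
  ∃ a b : {u : ℝ → ℝ // g.Mod u}, Quotient.mk (gSetoid g ℝ) a = x ∧
    Quotient.mk (gSetoid g ℝ) b = y ∧ ∃ m : ℕ, EvS fun ε => g.ρ ε ^ m ≤ b.1 ε - a.1 ε

/-- Order on ℕ~. -/
def Nt.le (g : Gauge) (m n : Nt g) : Prop :=
  ∃ a b : {k : ℝ → ℕ // g.NMod k}, Quotient.mk (natSetoid g) a = m ∧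
    Quotient.mk (natSetoid g) b = n ∧ EvS fun ε => a.1 ε ≤ b.1 ε

/-- The relation `|z − w| < r` between generalized numbers, r ∈ ℝ~. -/
def GQ.absLt (g : Gauge) (z w : GQ g 𝕜) (r : Rt g) : Prop :=
  ∃ a b : {x : ℝ → 𝕜 // g.Mod x}, ∃ u : {x : ℝ → ℝ // g.Mod x},
    Quotient.mk (gSetoid g 𝕜) a = z ∧ Quotient.mk (gSetoid g 𝕜) b = w ∧
    Quotient.mk (gSetoid g ℝ) u = r ∧
    ∃ m : ℕ, EvS fun ε => ‖a.1 ε - b.1 ε‖ + g.ρ ε ^ m ≤ u.1 ε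

/-- The relation `|z − w| ≤ r`. -/
def GQ.absLe (g : Gauge) (z w : GQ g 𝕜) (r : Rt g) : Prop :=
  ∃ a b : {x : ℝ → 𝕜 // g.Mod x}, ∃ u : {x : ℝ → ℝ // g.Mod x},
    Quotient.mk (gSetoid g 𝕜) a = z ∧ Quotient.mk (gSetoid g 𝕜) b = w ∧
    Quotient.mk (gSetoid g ℝ) u = r ∧ EvS fun ε => ‖a.1 ε - b.1 ε‖ ≤ u.1 ε

/-- `x ∈ ℂ~` is invertible. -/
def GQ.Invertible (g : Gauge) (x : GQ g 𝕜) : Prop :=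
  ∃ a : {u : ℝ → 𝕜 // g.Mod u}, Quotient.mk (gSetoid g 𝕜) a = x ∧
    ∃ m : ℕ, EvS fun ε => g.ρ ε ^ m ≤ ‖a.1 ε‖

/-- l is the hyperlimit of the hypersequence a. -/
def HyperLim (g : Gauge) (a : Nt g → GQ g 𝕜) (l : GQ g 𝕜) : Prop :=
  ∀ q : ℕ, ∃ M : Nt g, ∀ n : Nt g, Nt.le g M n → GQ.absLt g (a n) l (g.dpow q)

/-- ρ-moderate over hypersums. -/
def Gauge.SMod (g : Gauge) (A : ℕ → ℝ → 𝕜) : Prop :=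
  ∀ N : ℝ → ℕ, g.NMod N → g.Mod fun ε => ∑ n ∈ Finset.range (N ε + 1), A n ε

/-- Hyperseries equivalence of coefficient nets. -/
def Gauge.SEquiv (g : Gauge) (A B : ℕ → ℝ → 𝕜) : Prop :=
  ∀ N M : ℝ → ℕ, g.NMod N → g.NMod M →
    g.Negl fun ε => ∑ n ∈ Finset.Icc (N ε) (M ε), (A n ε - B n ε)

theorem nat_eq_of_abs_sub_lt_one {a b : ℕ} (h : |(a:ℝ) - b| < 1) : a = b := by
  rcases lt_trichotomy a b with hlt | he | hgt
  · exfalso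
    have h1 : (a:ℝ) + 1 ≤ b := by exact_mod_cast Nat.succ_le_of_lt hlt
    have h2 := abs_lt.mp h
    linarith [h2.1]
  · exact he
  · exfalso
    have h1 : (b:ℝ) + 1 ≤ a := by exact_mod_cast Nat.succ_le_of_lt hgt
    have h2 := abs_lt.mp h
    linarith [h2.2]

theorem natEqEv (g : Gauge) {N M : ℝ → ℕ} (h : g.Negl fun ε => (N ε : ℝ) - M ε) :
    EvS fun ε => N ε = M ε := by
  refine ((h 1).and (g.evs_le (by norm_num : (0:ℝ) < 1/2))).mono fun ε hε hε1 hh => ?_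
  obtain ⟨h1, h2⟩ := hh
  apply nat_eq_of_abs_sub_lt_one
  have : ‖(N ε : ℝ) - M ε‖ = |(N ε : ℝ) - M ε| := Real.norm_eq_abs _
  rw [this] at h1
  calc |(N ε:ℝ) - M ε| ≤ g.ρ ε ^ 1 := h1
    _ = g.ρ ε := pow_one _
    _ ≤ 1/2 := h2
    _ < 1 := by norm_num

/-- Lift a representative-level construction indexed by hypernaturals to ℕ~. -/
def Nt.lift (g : Gauge) (F : (ℝ → ℕ) → ℝ → 𝕜)
    (hmod : ∀ N, g.NMod N → g.Mod (F N))
    (hcong : ∀ N M : ℝ → ℕ, EvS (fun ε => N ε = M ε) → EvS fun ε => F N ε = F M ε) :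
    Nt g → GQ g 𝕜 :=
  Quotient.lift (fun N => GQ.mk g (F N.1) (hmod N.1 N.2)) (by
    intro a b hab
    apply Quotient.sound
    exact g.negl_of_evs_eq (hcong a.1 b.1 (natEqEv g hab)))

def Nt.lift₂ (g : Gauge) (F : (ℝ → ℕ) → (ℝ → ℕ) → ℝ → 𝕜)
    (hmod : ∀ N M, g.NMod N → g.NMod M → g.Mod (F N M))
    (hcong : ∀ N N' M M' : ℝ → ℕ, EvS (fun ε => N ε = N' ε) → EvS (fun ε => M ε = M' ε) →
      EvS fun ε => F N M ε = F N' M' ε) :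
    Nt g → Nt g → GQ g 𝕜 :=
  Quotient.lift₂ (fun N M => GQ.mk g (F N.1 M.1) (hmod N.1 M.1 N.2 M.2)) (by
    intro a b a' b' ha hb
    apply Quotient.sound
    exact g.negl_of_evs_eq (hcong a.1 a'.1 b.1 b'.1 (natEqEv g ha) (natEqEv g hb)))

/-- The hypersequence of partial hypersums N ↦ Σ_{n=0}^{N} a_n. -/
def partialSum (g : Gauge) (A : ℕ → ℝ → 𝕜) (hA : g.SMod A) : Nt g → GQ g 𝕜 :=
  Nt.lift g (fun N ε => ∑ n ∈ Finset.range (N ε + 1), A n ε) (fun N hN => hA N hN)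
    (fun N M h => h.mono fun ε _ _ he => by rw [he])

/-- The hyperseries Σ_{n∈ℕ~} a_n converges to s. -/
def HSConv (g : Gauge) (A : ℕ → ℝ → 𝕜) (hA : g.SMod A) (s : GQ g 𝕜) : Prop :=
  HyperLim g (partialSum g A hA) s

theorem Gauge.NMod.mono {g : Gauge} {a b : ℝ → ℕ} (hb : g.NMod b) (h : ∀ ε, a ε ≤ b ε) :
    g.NMod a := by
  refine Gauge.Mod.of_norm_le hb fun ε _ _ => ?_
  rw [Real.norm_eq_abs, abs_of_nonneg (Nat.cast_nonneg _), abs_of_nonneg (Nat.cast_nonneg _)]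
  exact_mod_cast h ε

theorem Gauge.SMod.range {g : Gauge} {A : ℕ → ℝ → 𝕜} (hA : g.SMod A) {N : ℝ → ℕ}
    (hN : g.NMod N) : g.Mod fun ε => ∑ n ∈ Finset.range (N ε), A n ε := by
  have hN' : g.NMod fun ε => N ε - 1 := hN.mono fun ε => Nat.sub_le _ _
  obtain ⟨K, hK⟩ := hA _ hN'
  refine ⟨K, hK.mono fun ε hε hε1 h => ?_⟩
  rcases Nat.eq_zero_or_pos (N ε) with h0 | h0
  · show ‖∑ n ∈ Finset.range (N ε), A n ε‖ ≤ _
    rw [h0]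
    simp only [Finset.range_zero, Finset.sum_empty, norm_zero]
    exact le_trans (norm_nonneg _) h
  · have he : N ε - 1 + 1 = N ε := Nat.succ_pred_eq_of_pos h0
    show ‖∑ n ∈ Finset.range (N ε), A n ε‖ ≤ _
    rw [← he]
    exact h

theorem Gauge.SMod.termMod {g : Gauge} {A : ℕ → ℝ → 𝕜} (hA : g.SMod A) {N : ℝ → ℕ}
    (hN : g.NMod N) : g.Mod fun ε => A (N ε) ε := by
  have h := (hA N hN).sub (hA.range hN)
  have heq : (fun ε => (∑ n ∈ Finset.range (N ε + 1), A n ε) -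
      ∑ n ∈ Finset.range (N ε), A n ε) = fun ε => A (N ε) ε := by
    funext ε
    rw [Finset.sum_range_succ]
    ring
  rwa [heq] at h

/-- The extension of the terms of a hyperseries to ℕ~ : n ↦ a_n. -/
def GQ.term (g : Gauge) (A : ℕ → ℝ → 𝕜) (hA : g.SMod A) : Nt g → GQ g 𝕜 :=
  Nt.lift g (fun N ε => A (N ε) ε) (fun _ hN => hA.termMod hN)
    (fun N M h => h.mono fun ε _ _ he => by rw [he])

theorem norm_sum_Icc_le (A : ℕ → 𝕜) (N M : ℕ) :
    ‖∑ n ∈ Finset.Icc N M, A n‖ ≤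
      ‖∑ n ∈ Finset.range (M+1), A n‖ + ‖∑ n ∈ Finset.range N, A n‖ := by
  rcases le_or_gt N (M+1) with h | h
  · have key : (∑ n ∈ Finset.range N, A n) + (∑ n ∈ Finset.Icc N M, A n)
        = ∑ n ∈ Finset.range (M+1), A n := by
      rw [Finset.range_eq_Ico, Finset.range_eq_Ico, ← Finset.Ico_add_one_right_eq_Icc]
      exact Finset.sum_Ico_consecutive A (Nat.zero_le N) h
    have heq : ∑ n ∈ Finset.Icc N M, A n
        = (∑ n ∈ Finset.range (M+1), A n) - ∑ n ∈ Finset.range N, A n := by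
      rw [← key]; ring
    rw [heq]
    exact norm_sub_le _ _
  · rw [Finset.Icc_eq_empty (by omega)]
    simp only [Finset.sum_empty, norm_zero]
    positivity

theorem Gauge.SMod.IccMod {g : Gauge} {A : ℕ → ℝ → 𝕜} (hA : g.SMod A) {N M : ℝ → ℕ}
    (hN : g.NMod N) (hM : g.NMod M) :
    g.Mod fun ε => ∑ n ∈ Finset.Icc (N ε) (M ε), A n ε := by
  have h1 := (hA M hM).norm
  have h2 := (hA.range hN).norm
  refine Gauge.Mod.of_norm_le (h1.add h2) fun ε _ _ => ?_
  have hnn : (0:ℝ) ≤ ‖∑ n ∈ Finset.range (M ε + 1), A n ε‖ + ‖∑ n ∈ Finset.range (N ε), A n ε‖ :=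
    add_nonneg (norm_nonneg _) (norm_nonneg _)
  rw [abs_of_nonneg hnn]
  exact norm_sum_Icc_le _ _ _

/-- The hypersum Σ_{n=N}^{M} a_n as a function of N, M ∈ ℕ~. -/
def hypersum (g : Gauge) (A : ℕ → ℝ → 𝕜) (hA : g.SMod A) : Nt g → Nt g → GQ g 𝕜 :=
  Nt.lift₂ g (fun N M ε => ∑ n ∈ Finset.Icc (N ε) (M ε), A n ε)
    (fun _ _ hN hM => hA.IccMod hN hM)
    (fun N N' M M' h h' => (h.and h').mono fun ε _ _ he => by
      rw [he.1, he.2])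

theorem Gauge.NMod.add {g : Gauge} {a b : ℝ → ℕ} (ha : g.NMod a) (hb : g.NMod b) :
    g.NMod fun ε => a ε + b ε := by
  have h := Gauge.Mod.add (𝕜 := ℝ) ha hb
  show g.Mod fun ε => ((a ε + b ε : ℕ) : ℝ)
  have heq : (fun ε => ((a ε + b ε : ℕ) : ℝ)) = fun ε => ((a ε : ℝ) + (b ε : ℝ)) := by
    funext ε; push_cast; ring
  rwa [heq]

/-- Addition on ℕ~. -/
def Nt.add (g : Gauge) : Nt g → Nt g → Nt g :=
  Quotient.lift₂ (fun a b => Nt.mk g (fun ε => a.1 ε + b.1 ε) (a.2.add b.2)) (by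
    intro a b a' b' ha hb
    apply Quotient.sound
    have h := ((natEqEv g ha).and (natEqEv g hb))
    exact g.negl_of_evs_eq (h.mono fun ε _ _ he => by
      show ((a.1 ε + b.1 ε : ℕ) : ℝ) = ((a'.1 ε + b'.1 ε : ℕ) : ℝ)
      rw [he.1, he.2]))

/-- Subtraction on generalized numbers. -/
def GQ.sub (g : Gauge) : GQ g 𝕜 → GQ g 𝕜 → GQ g 𝕜 :=
  Quotient.lift₂ (fun a b => GQ.mk g (fun ε => a.1 ε - b.1 ε) (a.2.sub b.2)) (by
    intro a b a' b' ha hb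
    apply Quotient.sound
    show g.Negl _
    have h := Gauge.Negl.sub ha hb
    have heq : (fun ε => (a.1 ε - a'.1 ε) - (b.1 ε - b'.1 ε))
        = fun ε => (a.1 ε - b.1 ε) - (a'.1 ε - b'.1 ε) := by funext ε; ring
    rwa [heq] at h)

/-- Multiplication on generalized numbers. -/
def GQ.mul (g : Gauge) : GQ g 𝕜 → GQ g 𝕜 → GQ g 𝕜 :=
  Quotient.lift₂ (fun a b => GQ.mk g (fun ε => a.1 ε * b.1 ε) (a.2.mul b.2)) (by
    intro a b a' b' ha hb
    apply Quotient.sound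
    show g.Negl _
    have h1 : g.Negl fun ε => (a.1 ε - a'.1 ε) * b.1 ε := Gauge.Negl.mul_mod ha b.2
    have h2 : g.Negl fun ε => (b.1 ε - b'.1 ε) * a'.1 ε := Gauge.Negl.mul_mod hb a'.2
    have h := h1.add h2
    have heq : (fun ε => (a.1 ε - a'.1 ε) * b.1 ε + (b.1 ε - b'.1 ε) * a'.1 ε)
        = fun ε => a.1 ε * b.1 ε - a'.1 ε * b'.1 ε := by funext ε; ring
    rwa [heq] at h)

/-- The absolute value |·| : ℂ~ → ℝ~. -/
def GQ.abs (g : Gauge) : GQ g 𝕜 → Rt g :=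
  Quotient.lift (fun a => GQ.mk g (fun ε => ‖a.1 ε‖) a.2.norm) (by
    intro a b hab
    apply Quotient.sound
    show g.Negl _
    intro q
    refine (hab q).mono fun ε _ _ h => ?_
    show ‖‖a.1 ε‖ - ‖b.1 ε‖‖ ≤ _
    rw [Real.norm_eq_abs]
    exact le_trans (abs_norm_sub_norm_le _ _) h)

/-- Weakly ρ-moderate coefficient nets. -/
def Gauge.WMod (g : Gauge) (a : ℕ → ℝ → ℂ) : Prop :=
  ∃ Q R : ℕ, EvS fun ε => ∀ n : ℕ, ‖a n ε‖ ≤ g.ρ ε ^ (-((n * Q + R : ℕ) : ℤ))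

/-- Strong ρ-equivalence of coefficient nets. -/
def Gauge.StrEquiv (g : Gauge) (a b : ℕ → ℝ → ℂ) : Prop :=
  ∀ q r : ℕ, EvS fun ε => ∀ n : ℕ, ‖a n ε - b n ε‖ ≤ g.ρ ε ^ (n * q + r)

/-- The net of radii of convergence r_ε = (limsup_n |a_{nε}|^{1/n})⁻¹ ∈ [0,∞]. -/
def radNet (a : ℕ → ℝ → ℂ) (ε : ℝ) : ENNReal :=
  (Filter.limsup (fun n : ℕ => ENNReal.ofReal (‖a n ε‖ ^ ((n : ℝ)⁻¹))) Filter.atTop)⁻¹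

/-- Condition (i): |z − c| < rad (a_n)_c, as classes (via representatives). -/
def RadLt (g : Gauge) (a : ℕ → ℝ → ℂ) (z c : Ct g) : Prop :=
  ∃ zr cr : ℝ → ℂ, ∃ a' : ℕ → ℝ → ℂ, IsRep g zr z ∧ IsRep g cr c ∧
    g.WMod a' ∧ g.StrEquiv a a' ∧
    ∃ m : ℕ, EvS fun ε => ENNReal.ofReal (‖zr ε - cr ε‖ + g.ρ ε ^ m) ≤ radNet a' ε

/-- The coefficient net of the hyper-power series Σ a_n (z−c)^n. -/
def PSeriesNet (a : ℕ → ℝ → ℂ) (zr cr : ℝ → ℂ) : ℕ → ℝ → ℂ :=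
  fun n ε => a n ε * (zr ε - cr ε) ^ n

/-- Conditions (ii)-(iv) of the definition of the set of convergence, for given
representatives. -/
def ConvConds (g : Gauge) (a : ℕ → ℝ → ℂ) (zr cr : ℝ → ℂ) (z : Ct g) : Prop :=
  ∃ hS : g.SMod (PSeriesNet a zr cr),
    (EvS fun ε => Summable fun n : ℕ => PSeriesNet a zr cr n ε) ∧
    (∃ hm : g.Mod fun ε => ∑' n : ℕ, PSeriesNet a zr cr n ε,
      HyperLim g (partialSum g _ hS) (GQ.mk g _ hm)) ∧
    (∀ zr' : ℝ → ℂ, IsRep g zr' z →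
      (EvS fun ε => Summable fun n : ℕ => (n : ℂ) * a n ε * (zr' ε - cr ε) ^ (n - 1)) ∧
      g.Mod fun ε => ∑' n : ℕ, (n : ℂ) * a n ε * (zr' ε - cr ε) ^ (n - 1))

/-- The set of convergence σ((a_n)_c, c) of a hyper-power series. -/
def convSet (g : Gauge) (a : ℕ → ℝ → ℂ) (c : Ct g) : Set (Ct g) :=
  { z | RadLt g a z c ∧
      ∃ zr cr : ℝ → ℂ, ∃ a' : ℕ → ℝ → ℂ, IsRep g zr z ∧ IsRep g cr c ∧
        g.WMod a' ∧ g.StrEquiv a a' ∧ ConvConds g a' zr cr z }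

/-- Sharply open subsets of ℂ~. -/
def SharplyOpen (g : Gauge) (U : Set (Ct g)) : Prop :=
  ∀ z ∈ U, ∃ r : Rt g, Rt.lt g (GQ.zero g ℝ) r ∧ ∀ w : Ct g, GQ.absLt g w z r → w ∈ U

/-- `P ε` for all small ε in L. -/
def EvSOn (L : Set ℝ) (P : ℝ → Prop) : Prop :=
  ∃ ε₀ : ℝ, 0 < ε₀ ∧ ε₀ ≤ 1 ∧ ∀ ε ∈ L, 0 < ε → ε ≤ ε₀ → P ε

/-- x ∈ ℂ~ is invertible on the subpoint L. -/
def GQ.InvertibleOn (g : Gauge) {𝕜 : Type} [RCLike 𝕜] (L : Set ℝ) (x : GQ g 𝕜) : Prop :=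
  ∃ a : {u : ℝ → 𝕜 // g.Mod u}, Quotient.mk (gSetoid g 𝕜) a = x ∧
    ∃ m : ℕ, EvSOn L fun ε => g.ρ ε ^ m ≤ ‖a.1 ε‖

theorem Gauge.nmod_const (g : Gauge) (c : ℕ) : g.NMod fun _ => c := by
  refine ⟨c + 1, (g.evs_le (by positivity : (0:ℝ) < 1/(c+1))).mono fun ε hε hε1 h3 => ?_⟩
  have hρ := g.pos ε hε hε1
  show ‖((c:ℕ) : ℝ)‖ ≤ _
  rw [Real.norm_eq_abs, abs_of_nonneg (Nat.cast_nonneg _)]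
  have hc1 : (0:ℝ) < (c:ℝ) + 1 := by positivity
  calc (c:ℝ) ≤ 1 / g.ρ ε := by
        rw [le_div_iff₀ hρ]
        calc (c:ℝ) * g.ρ ε ≤ (c:ℝ) * (1/(c+1)) :=
              mul_le_mul_of_nonneg_left h3 (Nat.cast_nonneg c)
          _ ≤ 1 := by rw [mul_one_div, div_le_one hc1]; linarith
    _ = g.ρ ε ^ (-((1:ℕ):ℤ)) := by
        rw [show (-((1:ℕ):ℤ)) = (-1:ℤ) by norm_num, zpow_neg_one, one_div]
    _ ≤ g.ρ ε ^ (-((c+1:ℕ):ℤ)) := g.zpow_neg_le hε hε1 (by omega)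

theorem Gauge.SMod.shift {g : Gauge} {𝕜 : Type} [RCLike 𝕜] {A : ℕ → ℝ → 𝕜}
    (hA : g.SMod A) (N₀ : ℕ) : g.SMod fun n ε => A (n + N₀) ε := by
  intro K hK
  have h1 := hA (fun ε => N₀ + K ε) ((g.nmod_const N₀).add hK)
  have h2 := hA.range (g.nmod_const N₀)
  have h := h1.sub h2
  have heq : (fun ε => (∑ n ∈ Finset.range (N₀ + K ε + 1), A n ε) -
      ∑ n ∈ Finset.range N₀, A n ε) = fun ε => ∑ n ∈ Finset.range (K ε + 1), A (n + N₀) ε := by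
    funext ε
    have e1 : (∑ n ∈ Finset.range N₀, A n ε) + (∑ n ∈ Finset.Ico N₀ (N₀ + K ε + 1), A n ε)
        = ∑ n ∈ Finset.range (N₀ + K ε + 1), A n ε :=
      Finset.sum_range_add_sum_Ico _ (by omega)
    have e2 : ∑ n ∈ Finset.Ico N₀ (N₀ + K ε + 1), A n ε
        = ∑ n ∈ Finset.range (K ε + 1), A (N₀ + n) ε := by
      rw [Finset.sum_Ico_eq_sum_range, show N₀ + K ε + 1 - N₀ = K ε + 1 by omega]
    rw [← e1, e2]
    rw [add_sub_cancel_left]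
    exact Finset.sum_congr rfl fun n _ => by rw [Nat.add_comm]
  rwa [heq] at h

theorem absLt_dpow_rep {g : Gauge} {𝕜 : Type} [RCLike 𝕜] {z w : GQ g 𝕜} {q : ℕ}
    (h : GQ.absLt g z w (g.dpow q)) {x y : ℝ → 𝕜} (hx : IsRep g x z) (hy : IsRep g y w) :
    ∃ m : ℕ, EvS fun ε => ‖x ε - y ε‖ + g.ρ ε ^ m ≤ g.ρ ε ^ q := by
  obtain ⟨a, b, u, ha, hb, hu, m, hev⟩ := h
  obtain ⟨hxm, hxe⟩ := hx
  obtain ⟨hym, hye⟩ := hy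
  have n1 : g.Negl fun ε => x ε - a.1 ε := Quotient.exact (hxe.trans ha.symm)
  have n2 : g.Negl fun ε => y ε - b.1 ε := Quotient.exact (hye.trans hb.symm)
  have hu' : Quotient.mk (gSetoid g ℝ) u
      = Quotient.mk (gSetoid g ℝ) ⟨fun ε => g.ρ ε ^ q, g.mod_pow q⟩ := hu
  have n3 : g.Negl fun ε => u.1 ε - g.ρ ε ^ q := Quotient.exact hu'
  refine ⟨m + 1, ((((hev.and (n1 (m+2))).and (n2 (m+2))).and (n3 (m+2))).and
    (g.evs_le (by norm_num : (0:ℝ) < 1/3))).mono fun ε hε hε1 hh => ?_⟩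
  obtain ⟨⟨⟨⟨h0, h1⟩, h2⟩, h3⟩, h4⟩ := hh
  have hr := g.pos ε hε hε1
  have hxy : ‖x ε - y ε‖ ≤ ‖x ε - a.1 ε‖ + ‖a.1 ε - b.1 ε‖ + ‖y ε - b.1 ε‖ := by
    have he : x ε - y ε = (x ε - a.1 ε) + (a.1 ε - b.1 ε) + (b.1 ε - y ε) := by ring
    rw [he]
    calc ‖(x ε - a.1 ε) + (a.1 ε - b.1 ε) + (b.1 ε - y ε)‖
        ≤ ‖(x ε - a.1 ε) + (a.1 ε - b.1 ε)‖ + ‖b.1 ε - y ε‖ := norm_add_le _ _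
      _ ≤ ‖x ε - a.1 ε‖ + ‖a.1 ε - b.1 ε‖ + ‖b.1 ε - y ε‖ :=
          add_le_add_left (norm_add_le _ _) _
      _ = ‖x ε - a.1 ε‖ + ‖a.1 ε - b.1 ε‖ + ‖y ε - b.1 ε‖ := by rw [norm_sub_rev (b.1 ε)]
  have hu2 : u.1 ε ≤ g.ρ ε ^ q + g.ρ ε ^ (m+2) := by
    have h3' : |u.1 ε - g.ρ ε ^ q| ≤ g.ρ ε ^ (m+2) := by
      simpa [Real.norm_eq_abs] using h3
    have := le_trans (le_abs_self (u.1 ε - g.ρ ε ^ q)) h3'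
    linarith
  have e1 : g.ρ ε ^ (m+1) = g.ρ ε ^ m * g.ρ ε := pow_succ _ _
  have e2 : g.ρ ε ^ (m+2) = g.ρ ε ^ m * g.ρ ε * g.ρ ε := by
    rw [pow_succ, pow_succ]
  have hAm : (0:ℝ) ≤ g.ρ ε ^ m := pow_nonneg hr.le m
  nlinarith [mul_nonneg hAm hr.le, mul_nonneg (mul_nonneg hAm hr.le) hr.le,
    mul_le_mul_of_nonneg_left h4 (mul_nonneg hAm hr.le)]

theorem absLt_of_dpow_rep {g : Gauge} {𝕜 : Type} [RCLike 𝕜] {z w : GQ g 𝕜} {q : ℕ}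
    {x y : ℝ → 𝕜} (hx : IsRep g x z) (hy : IsRep g y w)
    (h : ∃ m : ℕ, EvS fun ε => ‖x ε - y ε‖ + g.ρ ε ^ m ≤ g.ρ ε ^ q) :
    GQ.absLt g z w (g.dpow q) := by
  obtain ⟨hxm, hxe⟩ := hx
  obtain ⟨hym, hye⟩ := hy
  exact ⟨⟨x, hxm⟩, ⟨y, hym⟩, ⟨fun ε => g.ρ ε ^ q, g.mod_pow q⟩, hxe, hye, rfl, h⟩

theorem Nt.le_add_right {g : Gauge} {K N M : Nt g} (h : Nt.le g K N) :
    Nt.le g K (Nt.add g N M) := by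
  obtain ⟨a, b, ha, hb, hev⟩ := h
  obtain ⟨mr, hmr⟩ := Quotient.exists_rep M
  refine ⟨a, ⟨fun ε => b.1 ε + mr.1 ε, b.2.add mr.2⟩, ha, ?_,
    hev.mono fun ε _ _ hle => le_trans hle (Nat.le_add_right _ _)⟩
  rw [← hb, ← hmr]
  rfl

theorem stmt2_aux (g : Gauge) (A : ℕ → ℝ → ℂ) (hA : g.SMod A) (s : Ct g)
    (hconv : HSConv g A hA s) (M : Nt g) :
    HyperLim g (fun N => hypersum g A hA N (Nt.add g N M)) (GQ.zero g ℂ) := by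
  intro q
  obtain ⟨M₀, hM₀⟩ := hconv (q+1)
  obtain ⟨m₀, hm₀⟩ := Quotient.exists_rep M₀
  obtain ⟨mr, hmr⟩ := Quotient.exists_rep M
  refine ⟨Nt.add g M₀ (Nt.mk g (fun _ => 1) (g.nmod_const 1)), ?_⟩
  intro N hle
  obtain ⟨c, d, hc, hd, hcd⟩ := hle
  have hc' : Quotient.mk (natSetoid g) c
      = Quotient.mk (natSetoid g) ⟨fun ε => m₀.1 ε + 1, m₀.2.add (g.nmod_const 1)⟩ := by
    rw [hc, ← hm₀]; rfl
  have hce : EvS fun ε => c.1 ε = m₀.1 ε + 1 := by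
    refine (natEqEv g ?_)
    have := Quotient.exact hc'
    exact this
  have hge : EvS fun ε => m₀.1 ε + 1 ≤ d.1 ε :=
    (hce.and hcd).mono fun ε _ _ h => by rw [← h.1]; exact h.2
  have hd'mod : g.NMod fun ε => d.1 ε - 1 := d.2.mono fun ε => Nat.sub_le _ _
  have hdm : g.NMod fun ε => d.1 ε + mr.1 ε := d.2.add mr.2
  have le1 : Nt.le g M₀ (Quotient.mk (natSetoid g) ⟨fun ε => d.1 ε + mr.1 ε, hdm⟩) :=
    ⟨m₀, ⟨fun ε => d.1 ε + mr.1 ε, hdm⟩, hm₀, rfl, hge.mono fun ε _ _ h => by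
      show m₀.1 ε ≤ d.1 ε + mr.1 ε; omega⟩
  have le2 : Nt.le g M₀ (Quotient.mk (natSetoid g) ⟨fun ε => d.1 ε - 1, hd'mod⟩) :=
    ⟨m₀, ⟨fun ε => d.1 ε - 1, hd'mod⟩, hm₀, rfl, hge.mono fun ε _ _ h => by
      show m₀.1 ε ≤ d.1 ε - 1; omega⟩
  have ab1 := hM₀ _ le1
  have ab2 := hM₀ _ le2
  obtain ⟨sr, hsr⟩ := Quotient.exists_rep s
  have reps : IsRep g sr.1 s := ⟨sr.2, by rw [← hsr]; rfl⟩
  have rep1 : IsRep g (fun ε => ∑ n ∈ Finset.range (d.1 ε + mr.1 ε + 1), A n ε)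
      (partialSum g A hA (Quotient.mk (natSetoid g) ⟨fun ε => d.1 ε + mr.1 ε, hdm⟩)) :=
    ⟨hA _ hdm, rfl⟩
  have rep2 : IsRep g (fun ε => ∑ n ∈ Finset.range ((d.1 ε - 1) + 1), A n ε)
      (partialSum g A hA (Quotient.mk (natSetoid g) ⟨fun ε => d.1 ε - 1, hd'mod⟩)) :=
    ⟨hA _ hd'mod, rfl⟩
  obtain ⟨m₁, h1⟩ := absLt_dpow_rep ab1 rep1 reps
  obtain ⟨m₂, h2⟩ := absLt_dpow_rep ab2 rep2 reps
  rw [← hd, ← hmr]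
  refine absLt_of_dpow_rep
    (x := fun ε => ∑ n ∈ Finset.Icc (d.1 ε) (d.1 ε + mr.1 ε), A n ε) (y := fun _ => 0)
    ⟨hA.IccMod d.2 hdm, rfl⟩ ⟨g.mod_const 0 (by simp), rfl⟩ ?_
  refine ⟨q + 1, (((h1.and h2).and hge).and
    (g.evs_le (by norm_num : (0:ℝ) < 1/3))).mono fun ε hε hε1 hh => ?_⟩
  obtain ⟨⟨⟨hh1, hh2⟩, hh3⟩, hh4⟩ := hh
  have hr := g.pos ε hε hε1
  have key : (∑ n ∈ Finset.range ((d.1 ε - 1) + 1), A n ε)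
      + (∑ n ∈ Finset.Icc (d.1 ε) (d.1 ε + mr.1 ε), A n ε)
      = ∑ n ∈ Finset.range (d.1 ε + mr.1 ε + 1), A n ε := by
    rw [show (d.1 ε - 1) + 1 = d.1 ε by omega, Finset.range_eq_Ico, Finset.range_eq_Ico, ← Finset.Ico_add_one_right_eq_Icc]
    exact Finset.sum_Ico_consecutive _ (Nat.zero_le _) (by omega)
  have hid : (fun ε => ∑ n ∈ Finset.Icc (d.1 ε) (d.1 ε + mr.1 ε), A n ε) ε - (fun _ => (0:ℂ)) ε
      = ((∑ n ∈ Finset.range (d.1 ε + mr.1 ε + 1), A n ε) - sr.1 ε)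
        - ((∑ n ∈ Finset.range ((d.1 ε - 1) + 1), A n ε) - sr.1 ε) := by
    simp only [sub_zero]
    rw [← key]; ring
  show ‖_‖ + _ ≤ _
  rw [hid]
  have hb : ‖((∑ n ∈ Finset.range (d.1 ε + mr.1 ε + 1), A n ε) - sr.1 ε)
        - ((∑ n ∈ Finset.range ((d.1 ε - 1) + 1), A n ε) - sr.1 ε)‖
      ≤ ‖(∑ n ∈ Finset.range (d.1 ε + mr.1 ε + 1), A n ε) - sr.1 ε‖
        + ‖(∑ n ∈ Finset.range ((d.1 ε - 1) + 1), A n ε) - sr.1 ε‖ := norm_sub_le _ _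
  have hp1 : (0:ℝ) ≤ g.ρ ε ^ m₁ := pow_nonneg hr.le _
  have hp2 : (0:ℝ) ≤ g.ρ ε ^ m₂ := pow_nonneg hr.le _
  have e1 : g.ρ ε ^ (q+1) = g.ρ ε ^ q * g.ρ ε := pow_succ _ _
  have hq : (0:ℝ) ≤ g.ρ ε ^ q := pow_nonneg hr.le _
  nlinarith [mul_le_mul_of_nonneg_left hh4 hq]

theorem GQ.mk_congr {g : Gauge} {𝕜 : Type} [RCLike 𝕜] {x y : ℝ → 𝕜} (h : x = y)
    (hx : g.Mod x) (hy : g.Mod y) : GQ.mk g x hx = GQ.mk g y hy := by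
  subst h; rfl

/-- if a hyperseries converges to s then the shifted partial sums converge
to s, the hypersums Σ_{n=N}^{N+M} tend to 0, and the terms tend to 0. -/
theorem stmt2 (g : Gauge) (A : ℕ → ℝ → ℂ) (hA : g.SMod A) (s : Ct g) (M : Nt g)
    (hconv : HSConv g A hA s) :
    HyperLim g (fun N => partialSum g A hA (Nt.add g N M)) s ∧
    HyperLim g (fun N => hypersum g A hA N (Nt.add g N M)) (GQ.zero g ℂ) ∧
    HyperLim g (GQ.term g A hA) (GQ.zero g ℂ) := by
  refine ⟨?_, stmt2_aux g A hA s hconv M, ?_⟩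
  · intro q
    obtain ⟨M₀, hM₀⟩ := hconv q
    exact ⟨M₀, fun N hle => hM₀ _ (Nt.le_add_right hle)⟩
  · have heq : GQ.term g A hA
        = fun N => hypersum g A hA N (Nt.add g N (Nt.mk g (fun _ => 0) (g.nmod_const 0))) := by
      funext N
      induction N using Quotient.ind with
      | _ n =>
        refine GQ.mk_congr ?_ _ _
        funext ε
        show A (n.1 ε) ε = ∑ k ∈ Finset.Icc (n.1 ε) (n.1 ε + 0), A k ε
        rw [Nat.add_zero, Finset.Icc_self, Finset.sum_singleton]
    rw [heq]
    exact stmt2_aux g A hA s hconv _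
end
end

section
/- Ratio test: let (a_n)_n = [a_{nε}]_s ∈ ℂ~_s be such that |a_n| > 0 (i.e. |a_n| is invertible in ℝ~) for all n ∈ ℕ~. Assume there are [k_ε] ∈ ℕ~ with all k_ε ∈ ℕ and L = [L_ε] ∈ ℝ~ with 0 < L < 1 such that for ε small: |a_{(n+1)ε}| ≤ L_ε |a_{nε}| for all n ∈ ℕ with n ≥ k_ε. Then (|a_{nε}|)_{n,ε} is ρ-moderate over hypersums, the hyperseries Σ_{n∈ℕ~} |a_n| converges in ℝ~, and consequently the hyperseries Σ_{n∈ℕ~} a_n converges in ℂ~. -/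
open Filter

noncomputable section

variable {𝕜 : Type} [RCLike 𝕜]

/-! ### Auxiliary lemmas for the ratio test -/

theorem ratio_pow_aux (f : ℕ → ℝ) (l : ℝ) (k : ℕ) (hl0 : 0 ≤ l)
    (h : ∀ n, k ≤ n → f (n + 1) ≤ l * f n) :
    ∀ j n, k ≤ n → f (n + j) ≤ l ^ j * f n := by
  intro j
  induction j with
  | zero => intro n _; simp
  | succ j ih =>
    intro n hn
    have h1 : f (n + j + 1) ≤ l * f (n + j) := h (n + j) (by omega)
    have h2 := ih n hn
    have he : n + (j + 1) = n + j + 1 := by omega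
    calc f (n + (j + 1)) = f (n + j + 1) := by rw [he]
      _ ≤ l * f (n + j) := h1
      _ ≤ l * (l ^ j * f n) := mul_le_mul_of_nonneg_left h2 hl0
      _ = l ^ (j + 1) * f n := by ring

theorem geom_sum_le_aux (l : ℝ) (hl0 : 0 ≤ l) (hl1 : l < 1) (n : ℕ) :
    ∑ j ∈ Finset.range n, l ^ j ≤ (1 - l)⁻¹ := by
  have hne : l ≠ 1 := ne_of_lt hl1
  rw [geom_sum_eq hne]
  have h1 : (0:ℝ) < 1 - l := by linarith
  have h2 : (l ^ n - 1) / (l - 1) = (1 - l ^ n) / (1 - l) := by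
    rw [← neg_div_neg_eq]; ring_nf
  rw [h2, div_le_iff₀ h1]
  have h3 : (0:ℝ) ≤ l ^ n := pow_nonneg hl0 n
  rw [inv_mul_cancel₀ h1.ne']
  linarith

theorem tail_sum_aux (f : ℕ → ℝ) (l : ℝ) (k : ℕ) (hl0 : 0 ≤ l) (hl1 : l < 1)
    (h : ∀ n, k ≤ n → f (n + 1) ≤ l * f n) (hf : ∀ n, 0 ≤ f n) (N M : ℕ) (hN : k ≤ N) :
    ∑ n ∈ Finset.Icc N M, f n ≤ (1 - l)⁻¹ * f N := by
  have key : ∀ n ∈ Finset.Icc N M, f n ≤ l ^ (n - N) * f N := by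
    intro n hn
    have h1 : N ≤ n := (Finset.mem_Icc.mp hn).1
    have h2 := ratio_pow_aux f l k hl0 h (n - N) N hN
    rwa [show N + (n - N) = n by omega] at h2
  calc ∑ n ∈ Finset.Icc N M, f n ≤ ∑ n ∈ Finset.Icc N M, l ^ (n - N) * f N :=
        Finset.sum_le_sum key
    _ = (∑ n ∈ Finset.Icc N M, l ^ (n - N)) * f N := by rw [Finset.sum_mul]
    _ ≤ (1 - l)⁻¹ * f N := by
        apply mul_le_mul_of_nonneg_right _ (hf N)
        rw [← Finset.Ico_add_one_right_eq_Icc, Finset.sum_Ico_eq_sum_range]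
        calc ∑ j ∈ Finset.range (M + 1 - N), l ^ (N + j - N)
            = ∑ j ∈ Finset.range (M + 1 - N), l ^ j :=
              Finset.sum_congr rfl fun j _ => by congr 1; omega
          _ ≤ (1 - l)⁻¹ := geom_sum_le_aux l hl0 hl1 _

theorem rt_lt_elim (g : Gauge) {x y : ℝ → ℝ} (hx : g.Mod x) (hy : g.Mod y)
    (h : Rt.lt g (GQ.mk g x hx) (GQ.mk g y hy)) :
    ∃ m : ℕ, EvS fun ε => g.ρ ε ^ m ≤ y ε - x ε := by
  obtain ⟨a, b, ha, hb, m, hm⟩ := h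
  have hax : g.Negl fun ε => a.1 ε - x ε := Quotient.exact ha
  have hby : g.Negl fun ε => b.1 ε - y ε := Quotient.exact hb
  refine ⟨m + 1, ((((hax (m + 2)).and (hby (m + 2))).and hm).and
    (g.evs_le (by norm_num : (0:ℝ) < 1/2))).mono fun ε hε hε1 hh => ?_⟩
  obtain ⟨⟨⟨h1, h2⟩, h3⟩, h4⟩ := hh
  have hρ := g.pos ε hε hε1
  rw [Real.norm_eq_abs] at h1 h2
  have e1 : -(g.ρ ε ^ (m + 2)) ≤ a.1 ε - x ε := (abs_le.mp h1).1
  have e2 : b.1 ε - y ε ≤ g.ρ ε ^ (m + 2) := (abs_le.mp h2).2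
  have p1 : g.ρ ε ^ (m + 1) = g.ρ ε ^ m * g.ρ ε := pow_succ _ _
  have p2 : g.ρ ε ^ (m + 2) = g.ρ ε ^ m * g.ρ ε * g.ρ ε := by
    rw [pow_succ, pow_succ]
  have hp : (0:ℝ) ≤ g.ρ ε ^ m := pow_nonneg hρ.le m
  have t1 : g.ρ ε ^ m * g.ρ ε ≤ g.ρ ε ^ m * (1/2) := mul_le_mul_of_nonneg_left h4 hp
  have t2 : g.ρ ε ^ m * g.ρ ε * g.ρ ε ≤ g.ρ ε ^ m * (1/2) * (1/2) := by
    calc g.ρ ε ^ m * g.ρ ε * g.ρ ε ≤ g.ρ ε ^ m * (1/2) * g.ρ ε :=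
          mul_le_mul_of_nonneg_right t1 hρ.le
      _ ≤ g.ρ ε ^ m * (1/2) * (1/2) :=
          mul_le_mul_of_nonneg_left h4 (by positivity)
  linarith [e1, e2, h3]

theorem Gauge.zpow_neg_eq (g : Gauge) (ε : ℝ) (c : ℕ) :
    g.ρ ε ^ (-(c:ℤ)) = ((g.ρ ε)⁻¹) ^ c := by
  rw [zpow_neg, zpow_natCast, inv_pow]

theorem conv_of_tail {𝕜 : Type} [RCLike 𝕜] (g : Gauge) (B : ℕ → ℝ → 𝕜) (hB : g.SMod B)
    (J : ℝ → ℕ) (hJ : g.NMod J)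
    (ht : ∀ q : ℕ, EvS fun ε => ∀ M : ℕ,
      ∑ n ∈ Finset.Icc (J ε + 1) M, ‖B n ε‖ ≤ g.ρ ε ^ q) :
    ∃ s : GQ g 𝕜, HSConv g B hB s := by
  refine ⟨GQ.mk g (fun ε => ∑ n ∈ Finset.range (J ε + 1), B n ε) (hB J hJ), ?_⟩
  intro q
  refine ⟨Nt.mk g J hJ, fun n hn => ?_⟩
  obtain ⟨a, b, ha, hb, hab⟩ := hn
  have haJ : EvS fun ε => a.1 ε = J ε := natEqEv g (Quotient.exact ha)
  refine ⟨⟨fun ε => ∑ i ∈ Finset.range (b.1 ε + 1), B i ε, hB b.1 b.2⟩,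
    ⟨fun ε => ∑ i ∈ Finset.range (J ε + 1), B i ε, hB J hJ⟩,
    ⟨fun ε => g.ρ ε ^ q, g.mod_pow q⟩, ?_, rfl, rfl, q + 1, ?_⟩
  · rw [← hb]; rfl
  · refine (((haJ.and hab).and (ht (q + 2))).and
      (g.evs_le (by norm_num : (0:ℝ) < 1/2))).mono fun ε hε hε1 hh => ?_
    obtain ⟨⟨⟨h1, h2⟩, h3⟩, h4⟩ := hh
    have hρ := g.pos ε hε hε1
    have hJb : J ε ≤ b.1 ε := h1 ▸ h2
    have hsplit : (∑ i ∈ Finset.range (J ε + 1), B i ε) +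
        ∑ i ∈ Finset.Icc (J ε + 1) (b.1 ε), B i ε
        = ∑ i ∈ Finset.range (b.1 ε + 1), B i ε := by
      rw [← Finset.Ico_add_one_right_eq_Icc]
      exact Finset.sum_range_add_sum_Ico _ (by omega)
    have hd : ‖(∑ i ∈ Finset.range (b.1 ε + 1), B i ε) -
        ∑ i ∈ Finset.range (J ε + 1), B i ε‖ ≤ g.ρ ε ^ (q + 2) := by
      rw [← hsplit, add_sub_cancel_left]
      exact le_trans (norm_sum_le _ _) (h3 (b.1 ε))
    have p1 : g.ρ ε ^ (q + 1) = g.ρ ε ^ q * g.ρ ε := pow_succ _ _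
    have p2 : g.ρ ε ^ (q + 2) = g.ρ ε ^ q * g.ρ ε * g.ρ ε := by rw [pow_succ, pow_succ]
    have hp : (0:ℝ) ≤ g.ρ ε ^ q := pow_nonneg hρ.le q
    have t1 : g.ρ ε ^ q * g.ρ ε ≤ g.ρ ε ^ q * (1/2) := mul_le_mul_of_nonneg_left h4 hp
    have t2 : g.ρ ε ^ q * g.ρ ε * g.ρ ε ≤ g.ρ ε ^ q * (1/2) * (1/2) := by
      calc g.ρ ε ^ q * g.ρ ε * g.ρ ε ≤ g.ρ ε ^ q * (1/2) * g.ρ ε :=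
            mul_le_mul_of_nonneg_right t1 hρ.le
        _ ≤ g.ρ ε ^ q * (1/2) * (1/2) :=
            mul_le_mul_of_nonneg_left h4 (by positivity)
    show ‖_ - _‖ + g.ρ ε ^ (q + 1) ≤ g.ρ ε ^ q
    linarith [hd]

/-- ratio test for hyperseries. -/
theorem stmt5 (g : Gauge) (A : ℕ → ℝ → ℂ) (hA : g.SMod A)
    (hpos : ∀ n : Nt g, Rt.lt g (GQ.zero g ℝ) (GQ.abs g (GQ.term g A hA n)))
    (k : ℝ → ℕ) (hk : g.NMod k) (L : ℝ → ℝ) (hLmod : g.Mod L)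
    (hL0 : Rt.lt g (GQ.zero g ℝ) (GQ.mk g L hLmod))
    (hL1 : Rt.lt g (GQ.mk g L hLmod) (GQ.one g ℝ))
    (hratio : EvS fun ε => ∀ n : ℕ, k ε ≤ n → ‖A (n + 1) ε‖ ≤ L ε * ‖A n ε‖) :
    ∃ hS : g.SMod fun n ε => ‖A n ε‖,
      (∃ t : Rt g, HSConv g (fun n ε => ‖A n ε‖) hS t) ∧
      ∃ s : Ct g, HSConv g A hA s := by
  classical
  clear hpos
  -- bounds on L
  obtain ⟨m0, hm0⟩ := rt_lt_elim g (g.mod_const (0:ℝ) (by simp)) hLmod hL0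
  obtain ⟨m1, hm1⟩ := rt_lt_elim g hLmod (g.mod_const (1:ℝ) (by simp)) hL1
  -- argmax over [0, k ε]
  have hmax : ∀ ε : ℝ, ∃ n : ℕ, n ≤ k ε ∧ ∀ i, i ≤ k ε → ‖A i ε‖ ≤ ‖A n ε‖ := by
    intro ε
    obtain ⟨n, hn, hmx⟩ := (Finset.range (k ε + 1)).exists_max_image
      (fun i => ‖A i ε‖) ⟨0, Finset.mem_range.mpr (by omega)⟩
    exact ⟨n, by have := Finset.mem_range.mp hn; omega,
      fun i hi => hmx i (Finset.mem_range.mpr (by omega))⟩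
  set mx : ℝ → ℕ := fun ε => (hmax ε).choose with hmxdef
  have hmx1 : ∀ ε, mx ε ≤ k ε := fun ε => (hmax ε).choose_spec.1
  have hmx2 : ∀ ε i, i ≤ k ε → ‖A i ε‖ ≤ ‖A (mx ε) ε‖ := fun ε => (hmax ε).choose_spec.2
  have hmxmod : g.NMod mx := hk.mono hmx1
  obtain ⟨N₁, hN₁⟩ := hA.termMod hmxmod
  -- uniform bound on all terms
  have hglobal : EvS fun ε => ∀ n : ℕ, ‖A n ε‖ ≤ ((g.ρ ε)⁻¹) ^ N₁ := by
    refine (((hratio.and hN₁).and (hm0.and hm1)).and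
      (g.evs_le (by norm_num : (0:ℝ) < 1/2))).mono fun ε hε hε1 hh => ?_
    obtain ⟨⟨⟨h1, h2⟩, h3, h4⟩, _⟩ := hh
    have hρ := g.pos ε hε hε1
    rw [g.zpow_neg_eq] at h2
    have hl0 : 0 ≤ L ε := by have := pow_pos hρ m0; linarith
    have hl1 : L ε ≤ 1 := by have := pow_pos hρ m1; linarith
    intro n
    rcases le_or_gt n (k ε) with hn | hn
    · exact le_trans (hmx2 ε n hn) h2
    · have hb := ratio_pow_aux (fun i => ‖A i ε‖) (L ε) (k ε) hl0 h1 (n - k ε) (k ε) le_rfl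
      rw [show k ε + (n - k ε) = n by omega] at hb
      calc ‖A n ε‖ ≤ L ε ^ (n - k ε) * ‖A (k ε) ε‖ := hb
        _ ≤ 1 * ‖A (k ε) ε‖ :=
            mul_le_mul_of_nonneg_right (pow_le_one₀ hl0 hl1) (norm_nonneg _)
        _ = ‖A (k ε) ε‖ := one_mul _
        _ ≤ ‖A (mx ε) ε‖ := hmx2 ε (k ε) le_rfl
        _ ≤ ((g.ρ ε)⁻¹) ^ N₁ := h2
  -- moderateness over hypersums of the norms
  have hS : g.SMod fun n ε => ‖A n ε‖ := by
    intro N' hN'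
    obtain ⟨K', hK'⟩ := hN'
    refine ⟨N₁ + K' + 1, ((hglobal.and hK').and
      (g.evs_le (by norm_num : (0:ℝ) < 1/2))).mono fun ε hε hε1 hh => ?_⟩
    obtain ⟨⟨h1, h2⟩, h3⟩ := hh
    have hρ := g.pos ε hε hε1
    set u : ℝ := (g.ρ ε)⁻¹ with hu
    have hu1 : 1 ≤ u := by
      rw [hu, le_inv_comm₀ one_pos hρ]
      simpa using g.le_one ε hε hε1
    have hu2 : 2 ≤ u := by
      rw [hu, le_inv_comm₀ (by norm_num) hρ]
      linarith
    have hupow : ∀ c : ℕ, 1 ≤ u ^ c := fun c => one_le_pow₀ hu1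
    rw [Real.norm_eq_abs, abs_of_nonneg (Nat.cast_nonneg _), g.zpow_neg_eq] at h2
    have hsum : (∑ n ∈ Finset.range (N' ε + 1), ‖A n ε‖) ≤ ((N' ε : ℝ) + 1) * u ^ N₁ := by
      have hc := Finset.sum_le_card_nsmul (Finset.range (N' ε + 1))
        (fun n => ‖A n ε‖) (u ^ N₁) (fun n _ => h1 n)
      rw [Finset.card_range, nsmul_eq_mul] at hc
      push_cast at hc
      exact hc
    show ‖∑ n ∈ Finset.range (N' ε + 1), ‖A n ε‖‖ ≤ _
    rw [Real.norm_eq_abs,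
      abs_of_nonneg (Finset.sum_nonneg fun i _ => norm_nonneg _), g.zpow_neg_eq]
    have hkey : ((N' ε : ℝ) + 1) * u ^ N₁ ≤ u ^ (N₁ + K' + 1) := by
      have e : u ^ (N₁ + K' + 1) = u * u ^ K' * u ^ N₁ := by ring
      rw [e]
      have h5 : ((N' ε : ℝ) + 1) ≤ u * u ^ K' := by
        have : (1:ℝ) ≤ u ^ K' := hupow K'
        nlinarith
      exact mul_le_mul_of_nonneg_right h5 (by positivity)
    exact hsum.trans hkey
  -- the tail index
  set Q : ℝ → ℕ := fun ε => ⌈((g.ρ ε)⁻¹) ^ (m1 + 2)⌉₊ with hQdef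
  have hQmod : g.NMod Q := by
    refine ⟨m1 + 3, (g.evs_le (by norm_num : (0:ℝ) < 1/2)).mono fun ε hε hε1 h3 => ?_⟩
    have hρ := g.pos ε hε hε1
    set u : ℝ := (g.ρ ε)⁻¹ with hu
    have hu2 : 2 ≤ u := by
      rw [hu, le_inv_comm₀ (by norm_num) hρ]
      linarith
    have hupos : 0 < u ^ (m1 + 2) := by positivity
    have hc : (Q ε : ℝ) < u ^ (m1 + 2) + 1 := Nat.ceil_lt_add_one hupos.le
    have h1 : (1:ℝ) ≤ u ^ (m1 + 2) := one_le_pow₀ (by linarith)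
    show ‖(Q ε : ℝ)‖ ≤ _
    rw [Real.norm_eq_abs, abs_of_nonneg (Nat.cast_nonneg _), g.zpow_neg_eq]
    have e : u ^ (m1 + 3) = u * u ^ (m1 + 2) := by ring
    rw [← hu, e]
    nlinarith
  set J : ℝ → ℕ := fun ε => k ε + Q ε with hJdef
  have hJmod : g.NMod J := hk.add hQmod
  -- tail estimate
  have hAk : EvS fun ε => ‖A (k ε) ε‖ ≤ ((g.ρ ε)⁻¹) ^ N₁ :=
    hglobal.mono fun ε _ _ h => h (k ε)
  have htail : ∀ q : ℕ, EvS fun ε => ∀ M : ℕ,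
      ∑ n ∈ Finset.Icc (J ε + 1) M, ‖A n ε‖ ≤ g.ρ ε ^ q := by
    intro q
    have hδ : (0:ℝ) < 1 / (q + N₁ + m1 + 1) := by positivity
    refine (((hratio.and hAk).and (hm0.and hm1)).and
      ((g.evs_le hδ).and (g.evs_le (by norm_num : (0:ℝ) < 1/2)))).mono
      fun ε hε hε1 hh => ?_
    obtain ⟨⟨⟨h1, h2⟩, h3, h4⟩, h5, h6⟩ := hh
    have hρ := g.pos ε hε hε1
    set u : ℝ := (g.ρ ε)⁻¹ with hu
    have hupos : 0 < u := by positivity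
    have hρm1 : (0:ℝ) < g.ρ ε ^ m1 := pow_pos hρ m1
    have hl0 : 0 ≤ L ε := by have := pow_pos hρ m0; linarith
    have hl1 : L ε < 1 := by linarith
    intro M
    -- step 1: geometric tail bound
    have hstep1 : ∑ n ∈ Finset.Icc (J ε + 1) M, ‖A n ε‖
        ≤ (1 - L ε)⁻¹ * ‖A (J ε + 1) ε‖ :=
      tail_sum_aux (fun n => ‖A n ε‖) (L ε) (k ε) hl0 hl1 h1
        (fun n => norm_nonneg _) (J ε + 1) M (by simp only [hJdef]; omega)
    -- step 2: bound on the term at J+1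
    have hstep2 : ‖A (J ε + 1) ε‖ ≤ L ε ^ Q ε * ‖A (k ε) ε‖ := by
      have hb := ratio_pow_aux (fun i => ‖A i ε‖) (L ε) (k ε) hl0 h1 (Q ε + 1) (k ε) le_rfl
      rw [show k ε + (Q ε + 1) = J ε + 1 by simp only [hJdef]; omega] at hb
      calc ‖A (J ε + 1) ε‖ ≤ L ε ^ (Q ε + 1) * ‖A (k ε) ε‖ := hb
        _ = L ε ^ Q ε * L ε * ‖A (k ε) ε‖ := by rw [pow_succ]
        _ ≤ L ε ^ Q ε * 1 * ‖A (k ε) ε‖ := by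
            apply mul_le_mul_of_nonneg_right _ (norm_nonneg _)
            exact mul_le_mul_of_nonneg_left hl1.le (pow_nonneg hl0 _)
        _ = L ε ^ Q ε * ‖A (k ε) ε‖ := by ring
    have hstep3 : (1 - L ε)⁻¹ ≤ u ^ m1 := by
      rw [hu, inv_pow]
      exact inv_anti₀ hρm1 (by linarith)
    -- step 4: exponential bound on L^Q
    have hQR : u ^ (m1 + 2) ≤ (Q ε : ℝ) := Nat.le_ceil _
    have hlexp : L ε ^ Q ε ≤ Real.exp (-((Q ε : ℝ) * g.ρ ε ^ m1)) := by
      have hle : L ε ≤ Real.exp (-(g.ρ ε ^ m1)) := by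
        have := Real.add_one_le_exp (-(g.ρ ε ^ m1))
        linarith
      calc L ε ^ Q ε ≤ Real.exp (-(g.ρ ε ^ m1)) ^ Q ε := pow_le_pow_left₀ hl0 hle _
        _ = Real.exp (-((Q ε : ℝ) * g.ρ ε ^ m1)) := by
            rw [← Real.exp_nat_mul]; ring_nf
    -- combine exponentials
    have hlogu : -Real.log (g.ρ ε) ≤ u := by
      have hl := Real.log_le_sub_one_of_pos hupos
      rw [hu, Real.log_inv] at hl
      rw [hu]; linarith
    have hularge : (q + N₁ + m1 + 1 : ℝ) ≤ u := by
      rw [hu, le_inv_comm₀ (show (0:ℝ) < (q:ℝ) + (N₁:ℝ) + (m1:ℝ) + 1 by positivity) hρ,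
        ← one_div]
      exact h5
    have hQρ : ((q:ℝ) + N₁ + m1) * (-Real.log (g.ρ ε)) ≤ (Q ε : ℝ) * g.ρ ε ^ m1 := by
      have e1 : u ^ (m1 + 2) * g.ρ ε ^ m1 = u ^ 2 := by
        have : u ^ (m1 + 2) = u ^ m1 * u ^ 2 := by ring
        rw [this, hu, inv_pow, mul_comm (g.ρ ε ^ m1)⁻¹, mul_assoc,
          inv_mul_cancel₀ (pow_pos hρ m1).ne']
        ring
      have e2 : ((q:ℝ) + N₁ + m1) * (-Real.log (g.ρ ε)) ≤ u ^ 2 := by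
        have hnl : 0 ≤ -Real.log (g.ρ ε) := by
          have := Real.log_nonpos hρ.le (g.le_one ε hε hε1)
          linarith
        calc ((q:ℝ) + N₁ + m1) * (-Real.log (g.ρ ε)) ≤ ((q:ℝ) + N₁ + m1) * u :=
              mul_le_mul_of_nonneg_left hlogu (by positivity)
          _ ≤ u * u := mul_le_mul_of_nonneg_right (by linarith) hupos.le
          _ = u ^ 2 := by ring
      calc ((q:ℝ) + N₁ + m1) * (-Real.log (g.ρ ε)) ≤ u ^ 2 := e2
        _ = u ^ (m1 + 2) * g.ρ ε ^ m1 := e1.symm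
        _ ≤ (Q ε : ℝ) * g.ρ ε ^ m1 := mul_le_mul_of_nonneg_right hQR hρm1.le
    -- final exponential comparison
    have hfinal : Real.exp (-((Q ε : ℝ) * g.ρ ε ^ m1)) * u ^ (N₁ + m1) ≤ g.ρ ε ^ q := by
      have hlogρ : g.ρ ε = Real.exp (Real.log (g.ρ ε)) := (Real.exp_log hρ).symm
      have eρq : g.ρ ε ^ q = Real.exp ((q:ℝ) * Real.log (g.ρ ε)) := by
        rw [Real.exp_nat_mul, ← hlogρ]
      have h7 : u = Real.exp (-Real.log (g.ρ ε)) := by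
        rw [Real.exp_neg, Real.exp_log hρ, hu]
      have eu : u ^ (N₁ + m1) = Real.exp (-(((N₁:ℝ) + m1) * Real.log (g.ρ ε))) := by
        rw [h7, ← Real.exp_nat_mul]
        congr 1
        push_cast
        ring
      rw [eu, ← Real.exp_add, eρq, Real.exp_le_exp]
      push_cast at hQρ ⊢
      linarith
    -- put it all together
    calc ∑ n ∈ Finset.Icc (J ε + 1) M, ‖A n ε‖
        ≤ (1 - L ε)⁻¹ * ‖A (J ε + 1) ε‖ := hstep1
      _ ≤ u ^ m1 * (L ε ^ Q ε * ‖A (k ε) ε‖) := by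
          apply mul_le_mul hstep3 hstep2 (norm_nonneg _) (by positivity)
      _ ≤ u ^ m1 * (Real.exp (-((Q ε : ℝ) * g.ρ ε ^ m1)) * u ^ N₁) := by
          apply mul_le_mul_of_nonneg_left _ (by positivity)
          exact mul_le_mul hlexp h2 (norm_nonneg _) (Real.exp_pos _).le
      _ = Real.exp (-((Q ε : ℝ) * g.ρ ε ^ m1)) * u ^ (N₁ + m1) := by ring
      _ ≤ g.ρ ε ^ q := hfinal
  -- conclude
  refine ⟨hS, ?_, ?_⟩
  · exact conv_of_tail g (fun n ε => ‖A n ε‖) hS J hJmod fun q =>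
      (htail q).mono fun ε _ _ h M => by simpa [norm_norm] using h M
  · exact conv_of_tail g A hA J hJmod htail
end
end

section
/- Exponential hyperseries: let z ∈ ℂ~ admit a representative [z_ε] = z with |z_ε| ≤ −K log ρ_ε for ε small, for some real K > 0. Then the net (z_ε^n/n!)_{n,ε} is ρ-moderate over hypersums and the hyperseries Σ_{n∈ℕ~} z^n/n! converges to e^z := [e^{z_ε}] ∈ ℂ~. -/
open Filter

noncomputable section

variable {𝕜 : Type} [RCLike 𝕜]

theorem term_le_exp {x : ℝ} (hx : 0 ≤ x) (T : ℕ) : x ^ T / (T.factorial : ℝ) ≤ Real.exp x := by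
  refine le_trans ?_ (Real.sum_le_exp_of_nonneg hx (T+1))
  exact Finset.single_le_sum (f := fun i => x ^ i / (i.factorial : ℝ))
    (fun i _ => by positivity) (Finset.self_mem_range_succ T)

theorem halving {x : ℝ} (hx : 0 ≤ x) {T : ℕ} (hT : 2 * x ≤ (T:ℝ) + 1) :
    ∀ d : ℕ, x ^ (T + d) / ((T + d).factorial : ℝ) ≤ x ^ T / (T.factorial : ℝ) * (1/2) ^ d := by
  intro d
  induction d with
  | zero => simp
  | succ d ih =>
    have hd1 : (0:ℝ) < ((T+d:ℕ):ℝ) + 1 := by positivity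
    have hstep : x / (((T+d:ℕ):ℝ) + 1) ≤ 1/2 := by
      rw [div_le_div_iff₀ hd1 (by norm_num : (0:ℝ) < 2)]
      have : (T:ℝ) ≤ ((T+d:ℕ):ℝ) := by push_cast; linarith [Nat.cast_nonneg (α := ℝ) d]
      linarith
    have key : x ^ (T + (d+1)) / ((T + (d+1)).factorial : ℝ)
        = x ^ (T+d) / ((T+d).factorial : ℝ) * (x / (((T+d:ℕ):ℝ) + 1)) := by
      rw [show T + (d+1) = (T+d) + 1 by ring, pow_succ, Nat.factorial_succ,
        div_mul_div_comm]
      congr 1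
      push_cast
      ring
    calc x ^ (T + (d+1)) / ((T + (d+1)).factorial : ℝ)
        = x ^ (T+d) / ((T+d).factorial : ℝ) * (x / (((T+d:ℕ):ℝ) + 1)) := key
      _ ≤ (x ^ T / (T.factorial : ℝ) * (1/2)^d) * (1/2) :=
          mul_le_mul ih hstep (by positivity) (by positivity)
      _ = x ^ T / (T.factorial : ℝ) * (1/2)^(d+1) := by rw [pow_succ]; ring

set_option maxHeartbeats 1000000 in
theorem exp_tail_bound (z : ℂ) {T N : ℕ} (hT : 2 * ‖z‖ ≤ (T:ℝ) + 1) (hTN : T ≤ N) :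
    ‖Complex.exp z - ∑ k ∈ Finset.range N, z ^ k / (k.factorial : ℂ)‖ ≤
      2 * Real.exp ‖z‖ * (1/2) ^ (N - T) := by
  have hs : Summable fun k : ℕ => z ^ k / (k.factorial : ℂ) :=
    NormedSpace.expSeries_div_summable z
  have hexp : Complex.exp z = ∑' k : ℕ, z ^ k / (k.factorial : ℂ) := by
    rw [Complex.exp_eq_exp_ℂ]
    exact congrFun (NormedSpace.exp_eq_tsum_div (𝔸 := ℂ)) z
  have htail : Complex.exp z - ∑ k ∈ Finset.range N, z ^ k / (k.factorial : ℂ)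
      = ∑' k : ℕ, z ^ (k + N) / ((k + N).factorial : ℂ) := by
    rw [hexp, sub_eq_iff_eq_add, add_comm]
    exact (Summable.sum_add_tsum_nat_add N hs).symm
  rw [htail]
  have hnormsum : Summable fun k : ℕ => ‖z ^ (k + N) / ((k + N).factorial : ℂ)‖ :=
    (summable_nat_add_iff N).2 (NormedSpace.norm_expSeries_div_summable z)
  refine le_trans (norm_tsum_le_tsum_norm hnormsum) ?_
  have hterm : ∀ k : ℕ, ‖z ^ (k + N) / ((k + N).factorial : ℂ)‖
      ≤ (Real.exp ‖z‖ * (1/2)^(N-T)) * (1/2)^k := by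
    intro k
    have he : ‖z ^ (k + N) / ((k + N).factorial : ℂ)‖
        = ‖z‖ ^ (k+N) / (((k+N).factorial : ℕ) : ℝ) := by
      rw [norm_div, norm_pow]
      norm_num
    rw [he, show k + N = T + ((N - T) + k) by omega]
    calc ‖z‖ ^ (T + ((N-T)+k)) / ((T + ((N-T)+k)).factorial : ℝ)
        ≤ ‖z‖ ^ T / (T.factorial : ℝ) * (1/2) ^ ((N-T)+k) := halving (norm_nonneg z) hT _
      _ ≤ Real.exp ‖z‖ * ((1/2)^(N-T) * (1/2)^k) := by
          rw [pow_add]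
          exact mul_le_mul_of_nonneg_right (term_le_exp (norm_nonneg z) T) (by positivity)
      _ = (Real.exp ‖z‖ * (1/2)^(N-T)) * (1/2)^k := by ring
  have hgeo : Summable fun k : ℕ => (Real.exp ‖z‖ * (1/2:ℝ)^(N-T)) * (1/2:ℝ)^k :=
    (summable_geometric_of_lt_one (by norm_num) (by norm_num)).mul_left _
  calc (∑' k : ℕ, ‖z ^ (k + N) / ((k + N).factorial : ℂ)‖)
      ≤ ∑' k : ℕ, (Real.exp ‖z‖ * (1/2:ℝ)^(N-T)) * (1/2:ℝ)^k :=
        Summable.tsum_le_tsum hterm hnormsum hgeo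
    _ = (Real.exp ‖z‖ * (1/2)^(N-T)) * ∑' k : ℕ, (1/2:ℝ)^k := tsum_mul_left
    _ = 2 * Real.exp ‖z‖ * (1/2)^(N-T) := by
        rw [tsum_geometric_of_lt_one (by norm_num) (by norm_num)]; norm_num; ring

theorem rho_pow_eq {ρ : ℝ} (hρ : 0 < ρ) (q : ℕ) :
    ρ ^ q = Real.exp (-((q:ℝ) * (-Real.log ρ))) := by
  have h : -((q:ℝ) * (-Real.log ρ)) = (q:ℝ) * Real.log ρ := by ring
  rw [h, Real.exp_nat_mul, Real.exp_log hρ]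

theorem rho_zpow_eq {ρ : ℝ} (hρ : 0 < ρ) (q : ℕ) :
    ρ ^ (-(q:ℤ)) = Real.exp ((q:ℝ) * (-Real.log ρ)) := by
  rw [Real.exp_nat_mul, Real.exp_neg, Real.exp_log hρ, zpow_neg, zpow_natCast, inv_pow]

set_option maxHeartbeats 1000000

/-- the exponential hyperseries Σ z^n/n! converges to e^z for z of
logarithmic type. -/
theorem stmt8 (g : Gauge) (z : Ct g) (zr : ℝ → ℂ) (hm : g.Mod zr)
    (hrep : GQ.mk g zr hm = z) (K : ℝ) (hK : 0 < K)
    (hbound : EvS fun ε => ‖zr ε‖ ≤ -K * Real.log (g.ρ ε)) :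
    ∃ hS : g.SMod fun n ε => zr ε ^ n / (n.factorial : ℂ),
      ∃ hexp : g.Mod fun ε => Complex.exp (zr ε),
        HSConv g (fun n ε => zr ε ^ n / (n.factorial : ℂ)) hS (GQ.mk g _ hexp) := by
  classical
  set K' : ℕ := ⌈K⌉₊ with hK'def
  have hlog2 : 0 < Real.log 2 := Real.log_pos one_lt_two
  have key : EvS fun ε => Real.exp ‖zr ε‖ ≤ g.ρ ε ^ (-(K':ℤ)) := by
    refine hbound.mono fun ε hε hε1 hb => ?_
    have hρ := g.pos ε hε hε1
    have hL : 0 ≤ -Real.log (g.ρ ε) :=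
      neg_nonneg.2 (Real.log_nonpos hρ.le (g.le_one ε hε hε1))
    rw [rho_zpow_eq hρ]
    apply Real.exp_le_exp.2
    calc ‖zr ε‖ ≤ -K * Real.log (g.ρ ε) := hb
      _ = K * (-Real.log (g.ρ ε)) := by ring
      _ ≤ (K':ℝ) * (-Real.log (g.ρ ε)) := mul_le_mul_of_nonneg_right (Nat.le_ceil K) hL
  have hS : g.SMod fun n ε => zr ε ^ n / (n.factorial : ℂ) := by
    intro N hN
    refine ⟨K', key.mono fun ε hε hε1 hk => ?_⟩
    calc ‖∑ n ∈ Finset.range (N ε + 1), zr ε ^ n / (n.factorial : ℂ)‖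
        ≤ ∑ n ∈ Finset.range (N ε + 1), ‖zr ε ^ n / (n.factorial : ℂ)‖ := norm_sum_le _ _
      _ = ∑ n ∈ Finset.range (N ε + 1), ‖zr ε‖ ^ n / (n.factorial : ℝ) := by
          refine Finset.sum_congr rfl fun n _ => ?_
          rw [norm_div, norm_pow]
          norm_num
      _ ≤ Real.exp ‖zr ε‖ := Real.sum_le_exp_of_nonneg (norm_nonneg _) _
      _ ≤ _ := hk
  have hexp : g.Mod fun ε => Complex.exp (zr ε) := by
    refine ⟨K', key.mono fun ε hε hε1 hk => ?_⟩
    calc ‖Complex.exp (zr ε)‖ = Real.exp (zr ε).re := by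
          rw [Complex.norm_exp]
      _ ≤ Real.exp ‖zr ε‖ := Real.exp_le_exp.2
          (Complex.re_le_norm _)
      _ ≤ _ := hk
  refine ⟨hS, hexp, ?_⟩
  intro q
  set c : ℕ := q + 2 + K' with hcdef
  set Mfun : ℝ → ℕ := fun ε =>
    ⌈2*K*(-Real.log (g.ρ ε)) + (c:ℝ) * (-Real.log (g.ρ ε)) / Real.log 2⌉₊ + 2 with hMfdef
  have hCpos : (0:ℝ) < 2*K + (c:ℝ)/Real.log 2 + 3 := by positivity
  have hMmod : g.NMod Mfun := by
    refine ⟨2, (g.evs_le (show (0:ℝ) < 1/(2*K + (c:ℝ)/Real.log 2 + 3) by positivity)).mono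
      fun ε hε hε1 hsm => ?_⟩
    have hρ := g.pos ε hε hε1
    have hρ1 := g.le_one ε hε hε1
    have hL0 : 0 ≤ -Real.log (g.ρ ε) := neg_nonneg.2 (Real.log_nonpos hρ.le hρ1)
    have hrpos : (0:ℝ) < (g.ρ ε)⁻¹ := inv_pos.2 hρ
    have hLle : -Real.log (g.ρ ε) ≤ (g.ρ ε)⁻¹ := by
      have h := Real.log_le_sub_one_of_pos hrpos
      rw [Real.log_inv] at h
      linarith
    have hr1 : (1:ℝ) ≤ (g.ρ ε)⁻¹ := by nlinarith [mul_inv_cancel₀ hρ.ne']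
    have hCr : 2*K + (c:ℝ)/Real.log 2 + 3 ≤ (g.ρ ε)⁻¹ := by
      rw [inv_eq_one_div, le_div_iff₀ hρ]
      calc (2*K + (c:ℝ)/Real.log 2 + 3) * g.ρ ε
          ≤ (2*K + (c:ℝ)/Real.log 2 + 3) * (1/(2*K + (c:ℝ)/Real.log 2 + 3)) :=
            mul_le_mul_of_nonneg_left hsm hCpos.le
        _ = 1 := by field_simp
    have hceil : (⌈2*K*(-Real.log (g.ρ ε)) + (c:ℝ)*(-Real.log (g.ρ ε))/Real.log 2⌉₊ : ℝ)
        < 2*K*(-Real.log (g.ρ ε)) + (c:ℝ)*(-Real.log (g.ρ ε))/Real.log 2 + 1 :=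
      Nat.ceil_lt_add_one (by positivity)
    show ‖((Mfun ε : ℕ):ℝ)‖ ≤ _
    rw [Real.norm_eq_abs, abs_of_nonneg (Nat.cast_nonneg _)]
    have hz : g.ρ ε ^ (-((2:ℕ):ℤ)) = ((g.ρ ε)⁻¹) * ((g.ρ ε)⁻¹) := by
      rw [zpow_neg, zpow_natCast, pow_two, mul_inv]
    rw [hz, hMfdef]
    push_cast
    have hmul1 : (2*K)*(-Real.log (g.ρ ε)) ≤ (2*K)*(g.ρ ε)⁻¹ :=
      mul_le_mul_of_nonneg_left hLle (by positivity)
    have hmul2 : ((c:ℝ)/Real.log 2)*(-Real.log (g.ρ ε)) ≤ ((c:ℝ)/Real.log 2)*(g.ρ ε)⁻¹ :=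
      mul_le_mul_of_nonneg_left hLle (by positivity)
    have hmul3 : (2*K + (c:ℝ)/Real.log 2 + 3) * (g.ρ ε)⁻¹ ≤ (g.ρ ε)⁻¹ * (g.ρ ε)⁻¹ :=
      mul_le_mul_of_nonneg_right hCr hrpos.le
    calc (⌈2*K*(-Real.log (g.ρ ε)) + (c:ℝ)*(-Real.log (g.ρ ε))/Real.log 2⌉₊ : ℝ) + 2
        ≤ 2*K*(-Real.log (g.ρ ε)) + (c:ℝ)*(-Real.log (g.ρ ε))/Real.log 2 + 3 := by
          linarith
      _ = (2*K)*(-Real.log (g.ρ ε)) + ((c:ℝ)/Real.log 2)*(-Real.log (g.ρ ε)) + 3 := by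
          ring
      _ ≤ (2*K)*(g.ρ ε)⁻¹ + ((c:ℝ)/Real.log 2)*(g.ρ ε)⁻¹ + 3*(g.ρ ε)⁻¹ := by linarith
      _ = (2*K + (c:ℝ)/Real.log 2 + 3) * (g.ρ ε)⁻¹ := by ring
      _ ≤ (g.ρ ε)⁻¹ * (g.ρ ε)⁻¹ := hmul3
  refine ⟨Nt.mk g Mfun hMmod, ?_⟩
  intro n hn
  obtain ⟨a', b', haM, hbn, hab⟩ := hn
  have haMf : EvS fun ε => a'.1 ε = Mfun ε := natEqEv g (Quotient.exact haM)
  refine ⟨⟨fun ε => ∑ k ∈ Finset.range (b'.1 ε + 1), zr ε ^ k / (k.factorial : ℂ),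
      hS b'.1 b'.2⟩,
    ⟨fun ε => Complex.exp (zr ε), hexp⟩,
    ⟨fun ε => g.ρ ε ^ q, g.mod_pow q⟩, ?_, rfl, rfl, q+1, ?_⟩
  · rw [← hbn]; rfl
  refine ((((hbound.and key).and (haMf.and hab)).and
    (g.evs_le (show (0:ℝ) < 1/2 by norm_num))).mono fun ε hε hε1 hh => ?_)
  obtain ⟨⟨⟨hb, hk⟩, heqa, hle⟩, hhalf⟩ := hh
  have hρ := g.pos ε hε hε1
  have hρ1 := g.le_one ε hε hε1
  have hL0 : 0 ≤ -Real.log (g.ρ ε) := neg_nonneg.2 (Real.log_nonpos hρ.le hρ1)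
  set x : ℝ := ‖zr ε‖ with hxdef
  set L : ℝ := -Real.log (g.ρ ε) with hLdef
  have hx0 : 0 ≤ x := norm_nonneg _
  have hxKL : x ≤ K * L := by rw [hLdef]; calc x ≤ -K * Real.log (g.ρ ε) := hb
                                _ = K * (-Real.log (g.ρ ε)) := by ring
  set T : ℕ := ⌈2*x⌉₊ with hTdef
  set N : ℕ := b'.1 ε + 1 with hNdef
  have hT2x : 2*x ≤ (T:ℝ) := Nat.le_ceil _
  have hTlt : (T:ℝ) < 2*x + 1 := Nat.ceil_lt_add_one (by positivity)
  have hMN : Mfun ε ≤ N := by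
    rw [hNdef, ← heqa]
    exact le_trans hle (Nat.le_succ _)
  have hMreal : 2*K*L + (c:ℝ)*L/Real.log 2 + 2 ≤ (Mfun ε : ℝ) := by
    rw [hMfdef]
    push_cast
    have := Nat.le_ceil (2*K*L + (c:ℝ)*L/Real.log 2)
    linarith
  have hNreal : 2*K*L + (c:ℝ)*L/Real.log 2 + 2 ≤ (N : ℝ) :=
    le_trans hMreal (by exact_mod_cast hMN)
  have hcL : 0 ≤ (c:ℝ)*L/Real.log 2 := by positivity
  have hTN : T ≤ N := by
    have : (T:ℝ) ≤ (N:ℝ) := by linarith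
    exact_mod_cast this
  have hdge : (c:ℝ)*L/Real.log 2 + 1 ≤ ((N - T : ℕ):ℝ) := by
    rw [Nat.cast_sub hTN]
    linarith
  have htb := exp_tail_bound (zr ε) (le_trans hT2x (by linarith)) hTN
  have hhalfpow : 2 * ((1:ℝ)/2) ^ (N - T) ≤ g.ρ ε ^ c := by
    have h12 : ((1:ℝ)/2) = Real.exp (-Real.log 2) := by
      rw [Real.exp_neg, Real.exp_log (by norm_num : (0:ℝ) < 2)]
      norm_num
    have h2 : (2:ℝ) = Real.exp (Real.log 2) := (Real.exp_log (by norm_num)).symm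
    have hd' : (c:ℝ)*L ≤ (((N - T : ℕ):ℝ) - 1) * Real.log 2 := by
      have hmul := mul_le_mul_of_nonneg_right
        (show (c:ℝ)*L/Real.log 2 ≤ ((N-T:ℕ):ℝ) - 1 from by linarith) hlog2.le
      rwa [div_mul_cancel₀ _ hlog2.ne'] at hmul
    rw [rho_pow_eq hρ, ← hLdef, h12, ← Real.exp_nat_mul]
    calc 2 * Real.exp (((N-T:ℕ):ℝ) * -Real.log 2)
        = Real.exp (Real.log 2 + ((N-T:ℕ):ℝ) * -Real.log 2) := by
          rw [Real.exp_add, Real.exp_log (by norm_num : (0:ℝ) < 2)]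
      _ ≤ Real.exp (-((c:ℝ)*L)) := Real.exp_le_exp.2 (by nlinarith [hd'])
  have hfinal : ‖Complex.exp (zr ε) -
      ∑ k ∈ Finset.range N, zr ε ^ k / (k.factorial : ℂ)‖ ≤ g.ρ ε ^ (q+2) := by
    have h1 : 2 * Real.exp x * ((1:ℝ)/2) ^ (N - T)
        ≤ g.ρ ε ^ (-(K':ℤ)) * (2 * ((1:ℝ)/2) ^ (N - T)) := by
      have := mul_le_mul_of_nonneg_right hk
        (show (0:ℝ) ≤ 2 * ((1:ℝ)/2) ^ (N-T) by positivity)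
      calc 2 * Real.exp x * ((1:ℝ)/2) ^ (N - T)
          = Real.exp x * (2 * ((1:ℝ)/2) ^ (N - T)) := by ring
        _ ≤ _ := this
    have h2 : g.ρ ε ^ (-(K':ℤ)) * (2 * ((1:ℝ)/2) ^ (N - T)) ≤
        g.ρ ε ^ (-(K':ℤ)) * g.ρ ε ^ c :=
      mul_le_mul_of_nonneg_left hhalfpow (zpow_nonneg hρ.le _)
    have h3 : g.ρ ε ^ (-(K':ℤ)) * g.ρ ε ^ c = g.ρ ε ^ (q+2) := by
      rw [hcdef, zpow_neg, zpow_natCast]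
      rw [show q + 2 + K' = K' + (q+2) by ring, pow_add]
      rw [inv_mul_cancel_left₀ (pow_ne_zero _ hρ.ne')]
    exact le_trans htb (by linarith)
  show ‖(∑ k ∈ Finset.range (b'.1 ε + 1), zr ε ^ k / (k.factorial : ℂ)) -
      Complex.exp (zr ε)‖ + g.ρ ε ^ (q+1) ≤ g.ρ ε ^ q
  rw [norm_sub_rev]
  have e1 : g.ρ ε ^ (q+1) = g.ρ ε ^ q * g.ρ ε := pow_succ _ _
  have e2 : g.ρ ε ^ (q+2) = g.ρ ε ^ q * g.ρ ε * g.ρ ε := by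
    rw [pow_succ, pow_succ]
  have hq0 : 0 ≤ g.ρ ε ^ q := pow_nonneg hρ.le q
  have p1 : g.ρ ε ^ q * g.ρ ε ≤ g.ρ ε ^ q * (1/2) :=
    mul_le_mul_of_nonneg_left hhalf hq0
  have p2 : g.ρ ε ^ q * g.ρ ε * g.ρ ε ≤ g.ρ ε ^ q * (1/2) * (1/2) :=
    mul_le_mul p1 hhalf hρ.le (by positivity)
  rw [← hNdef]
  linarith [hfinal, p1, p2, e1, e2, hq0]
end
end
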